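/- arXiv:0804.0542 — 6 statements merged into one kernel-verified Lean document; each statement's English description precedes it below -/
import Mathlib

section
/- There exists a constant C > 0, depending only on K, γ₁, γ₂ and r, such that for every t₀ > 0, every M_f > 0, and every continuous f : [t₀,∞) → ℝᴺ with ‖f(t)‖ ≤ M_f·e^{−t} for all t ≥ t₀, the function y(t) := ∫_{t₀}^{t} e^{𝒜(t−s)}(P₂+P₃)f(s) ds − ∫_{t}^{∞} e^{𝒜(t−s)}P₁ f(s) ds is well defined (the improper integral converges absolutely), solves y′(t) = 𝒜y(t) + f(t) for all t ≥ t₀, and satisfies ‖y(t)‖ ≤ C·M_f·e^{−t}(1 + (t−t₀)^r) for all t ≥ t₀. -/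
open MeasureTheory Set Filter
open scoped Topology

set_option synthInstance.maxHeartbeats 1000000
set_option maxHeartbeats 1000000

section Aux
variable {E : Type*} [NormedAddCommGroup E] [NormedSpace ℝ E] [CompleteSpace E]

lemma greenAux_exp_add (𝒜 : E →L[ℝ] E) (a b : ℝ) :
    NormedSpace.exp ((a + b) • 𝒜)
      = NormedSpace.exp (a • 𝒜) ∘L NormedSpace.exp (b • 𝒜) := by
  rw [add_smul]
  let +nondep : NormedAlgebra ℚ (E →L[ℝ] E) := .restrictScalars ℚ ℝ _
  refine NormedSpace.exp_add_of_commute ?_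
  unfold Commute SemiconjBy
  simp [smul_smul, mul_comm]

lemma greenAux_exp_cancel (𝒜 : E →L[ℝ] E) (a : ℝ) (x : E) :
    NormedSpace.exp (a • 𝒜) (NormedSpace.exp ((-a) • 𝒜) x) = x := by
  have h := greenAux_exp_add 𝒜 a (-a)
  rw [add_neg_cancel, zero_smul, NormedSpace.exp_zero] at h
  have := congrArg (fun (L : E →L[ℝ] E) => L x) h.symm
  simpa using this

lemma greenAux_integral_exp (b t : ℝ) (hb : 0 < b) :
    ∫ s in Ioi t, Real.exp (-b * s) = Real.exp (-b * t) / b := by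
  have hderiv : ∀ x ∈ Ioi t, HasDerivAt (fun x => -(Real.exp (-b * x) / b))
      (Real.exp (-b * x)) x := by
    intro x _
    have h1 : HasDerivAt (fun x : ℝ => -b * x) (-b) x := by
      simpa using (hasDerivAt_id x).const_mul (-b)
    have h2 := (h1.exp.div_const b).neg
    refine h2.congr_deriv ?_
    rw [mul_neg, neg_div, neg_neg, mul_div_assoc, div_self hb.ne', mul_one]
  have htend : Tendsto (fun x => -(Real.exp (-b * x) / b)) atTop (𝓝 (0:ℝ)) := by
    have h1 : Tendsto (fun x : ℝ => -b * x) atTop atBot :=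
      tendsto_id.const_mul_atTop_of_neg (neg_neg_iff_pos.2 hb)
    have := ((Real.tendsto_exp_atBot.comp h1).div_const b).neg
    simpa using this
  have hcont : ContinuousWithinAt (fun x => -(Real.exp (-b * x) / b)) (Ici t) t :=
    (((Real.continuous_exp.comp (continuous_const.mul continuous_id)).div_const b).neg).continuousWithinAt
  have h := integral_Ioi_of_hasDerivAt_of_tendsto hcont hderiv (exp_neg_integrableOn_Ioi t hb) htend
  rw [h]; ring

lemma greenAux_le_one_add_rpow {τ r : ℝ} (hτ : 0 ≤ τ) (hr : 1 ≤ r) : τ ≤ 1 + τ ^ r := by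
  rcases le_or_gt τ 1 with h | h
  · have : (0:ℝ) ≤ τ ^ r := Real.rpow_nonneg hτ r
    linarith
  · have h2 : τ ^ (1:ℝ) ≤ τ ^ r := Real.rpow_le_rpow_of_exponent_le h.le hr
    rw [Real.rpow_one] at h2
    linarith

end Aux

/-- existence of a constant `C`, depending only on `K, γ₁, γ₂, r`, such that
the Green-type integral `y(t) = ∫_{t₀}^t e^{𝒜(t-s)}(P₂+P₃) f(s) ds − ∫_t^∞ e^{𝒜(t-s)} P₁ f(s) ds`
is well defined, solves `y' = 𝒜 y + f`, and satisfies `‖y(t)‖ ≤ C M_f e^{-t} (1 + (t-t₀)^r)`. -/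
theorem green_bounded_solution (K r γ₁ γ₂ : ℝ)
    (hK : 0 < K) (hr : 1 ≤ r) (hγ₁ : -1 < γ₁) (hγ₂ : γ₂ < -1) :
    ∃ C > (0 : ℝ), ∀ (N : ℕ), 1 ≤ N →
      ∀ (𝒜 P₁ P₂ P₃ : EuclideanSpace ℝ (Fin N) →L[ℝ] EuclideanSpace ℝ (Fin N)),
      P₁ ∘L P₁ = P₁ → P₂ ∘L P₂ = P₂ → P₃ ∘L P₃ = P₃ →
      P₁ + P₂ + P₃ = 1 →
      P₁ ∘L P₂ = 0 → P₂ ∘L P₁ = 0 → P₁ ∘L P₃ = 0 →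
      P₃ ∘L P₁ = 0 → P₂ ∘L P₃ = 0 → P₃ ∘L P₂ = 0 →
      (∀ τ ≤ (0 : ℝ), ‖NormedSpace.exp (τ • 𝒜) ∘L P₁‖ ≤ K * Real.exp (γ₁ * τ)) →
      (∀ τ ≥ (0 : ℝ), ‖NormedSpace.exp (τ • 𝒜) ∘L P₂‖ ≤ K * (1 + τ ^ (r - 1)) * Real.exp (-τ)) →
      (∀ τ ≥ (0 : ℝ), ‖NormedSpace.exp (τ • 𝒜) ∘L P₃‖ ≤ K * Real.exp (γ₂ * τ)) →
      ∀ t₀ > (0 : ℝ), ∀ M_f > (0 : ℝ), ∀ f : ℝ → EuclideanSpace ℝ (Fin N),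
        ContinuousOn f (Set.Ici t₀) →
        (∀ t ≥ t₀, ‖f t‖ ≤ M_f * Real.exp (-t)) →
        -- the improper integral converges absolutely
        (∀ t ≥ t₀, IntegrableOn
            (fun s => NormedSpace.exp ((t - s) • 𝒜) (P₁ (f s))) (Set.Ioi t)) ∧
        -- y solves y' = 𝒜 y + f on [t₀, ∞)
        (∀ t ∈ Set.Ici t₀,
          HasDerivWithinAt
            (fun u => (∫ s in Set.Ioc t₀ u, NormedSpace.exp ((u - s) • 𝒜) ((P₂ + P₃) (f s)))
              - ∫ s in Set.Ioi u, NormedSpace.exp ((u - s) • 𝒜) (P₁ (f s)))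
            (𝒜 ((∫ s in Set.Ioc t₀ t, NormedSpace.exp ((t - s) • 𝒜) ((P₂ + P₃) (f s)))
                - ∫ s in Set.Ioi t, NormedSpace.exp ((t - s) • 𝒜) (P₁ (f s))) + f t)
            (Set.Ici t₀) t) ∧
        -- the exponential bound
        (∀ t ≥ t₀,
          ‖(∫ s in Set.Ioc t₀ t, NormedSpace.exp ((t - s) • 𝒜) ((P₂ + P₃) (f s)))
              - ∫ s in Set.Ioi t, NormedSpace.exp ((t - s) • 𝒜) (P₁ (f s))‖
            ≤ C * M_f * Real.exp (-t) * (1 + (t - t₀) ^ r)) := by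
  have hr0 : (0:ℝ) < r := lt_of_lt_of_le one_pos hr
  have hγ1' : (0:ℝ) < 1 + γ₁ := by linarith
  refine ⟨2*K + K/r + K/(1+γ₁), by positivity, ?_⟩
  intro N _hN 𝒜 P₁ P₂ P₃ _ _ _ hsum _ _ _ _ _ _ hb1 hb2 hb3 t₀ ht₀ M_f hM f hfc hfb
  let +nondep : NormedAlgebra ℚ (EuclideanSpace ℝ (Fin N) →L[ℝ] EuclideanSpace ℝ (Fin N)) :=
    .restrictScalars ℚ ℝ _
  -- continuity helpers
  have hexpcont : ∀ g : ℝ → ℝ, Continuous g →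
      Continuous fun s : ℝ => NormedSpace.exp (g s • 𝒜) :=
    fun g hg => NormedSpace.exp_continuous.comp (hg.smul continuous_const)
  have hQc : ∀ (Q : EuclideanSpace ℝ (Fin N) →L[ℝ] EuclideanSpace ℝ (Fin N))
      (g : ℝ → ℝ), Continuous g →
      ContinuousOn (fun s => NormedSpace.exp (g s • 𝒜) (Q (f s))) (Ici t₀) :=
    fun Q g hg => ((hexpcont g hg).continuousOn).clm_apply (Q.continuous.comp_continuousOn hfc)
  -- pointwise bound for the P₁ integrand
  have hptB : ∀ t, t₀ ≤ t → ∀ s ∈ Ioi t,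
      ‖NormedSpace.exp ((t - s) • 𝒜) (P₁ (f s))‖
        ≤ (K * M_f * Real.exp (γ₁ * t)) * Real.exp (-(1+γ₁) * s) := by
    intro t ht s hs
    have hs' : t < s := hs
    have e1 : Real.exp (γ₁ * (t - s)) * Real.exp (-s)
        = Real.exp (γ₁ * t) * Real.exp (-(1+γ₁) * s) := by
      rw [← Real.exp_add, ← Real.exp_add]; congr 1; ring
    calc ‖NormedSpace.exp ((t - s) • 𝒜) (P₁ (f s))‖
        = ‖(NormedSpace.exp ((t - s) • 𝒜) ∘L P₁) (f s)‖ := rfl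
      _ ≤ ‖NormedSpace.exp ((t - s) • 𝒜) ∘L P₁‖ * ‖f s‖ := ContinuousLinearMap.le_opNorm _ _
      _ ≤ (K * Real.exp (γ₁ * (t - s))) * (M_f * Real.exp (-s)) :=
          mul_le_mul (hb1 (t - s) (by linarith)) (hfb s (by linarith)) (norm_nonneg _)
            (by positivity)
      _ = (K * M_f * Real.exp (γ₁ * t)) * Real.exp (-(1+γ₁) * s) := by
          linear_combination (K * M_f) * e1
  have hdomB : ∀ t : ℝ, IntegrableOn
      (fun s => (K * M_f * Real.exp (γ₁ * t)) * Real.exp (-(1+γ₁) * s)) (Ioi t) :=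
    fun t => (exp_neg_integrableOn_Ioi t hγ1').const_mul _
  -- conclusion 1
  have key1 : ∀ t, t₀ ≤ t → IntegrableOn
      (fun s => NormedSpace.exp ((t - s) • 𝒜) (P₁ (f s))) (Ioi t) := by
    intro t ht
    have hmeas : AEStronglyMeasurable (fun s => NormedSpace.exp ((t - s) • 𝒜) (P₁ (f s)))
        (volume.restrict (Ioi t)) :=
      ((hQc P₁ (fun s => t - s) (continuous_const.sub continuous_id)).mono
        (fun s hs => ht.trans (le_of_lt hs))).aestronglyMeasurable measurableSet_Ioi
    exact Integrable.mono' (hdomB t) hmeas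
      ((ae_restrict_iff' measurableSet_Ioi).2 (ae_of_all _ (hptB t ht)))
  -- shifted integrands
  have hshift : ∀ (Q : EuclideanSpace ℝ (Fin N) →L[ℝ] EuclideanSpace ℝ (Fin N)) (t : ℝ),
      (fun s : ℝ => NormedSpace.exp ((-s) • 𝒜) (Q (f s)))
        = fun s => NormedSpace.exp ((-t) • 𝒜)
            (NormedSpace.exp ((t - s) • 𝒜) (Q (f s))) := by
    intro Q t; funext s
    rw [show (-s : ℝ) = -t + (t - s) by ring, greenAux_exp_add]; rfl
  have hIntNeg : ∀ t, t₀ ≤ t → IntegrableOn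
      (fun s => NormedSpace.exp ((-s) • 𝒜) (P₁ (f s))) (Ioi t) := by
    intro t ht
    rw [hshift P₁ t]
    exact (NormedSpace.exp ((-t) • 𝒜)).integrable_comp (key1 t ht)
  have hIocInt : ∀ (Q : EuclideanSpace ℝ (Fin N) →L[ℝ] EuclideanSpace ℝ (Fin N)) (u : ℝ),
      t₀ ≤ u → IntegrableOn
        (fun s => NormedSpace.exp ((-s) • 𝒜) (Q (f s))) (Ioc t₀ u) := by
    intro Q u hu
    exact (((hQc Q (fun s => -s) continuous_neg).mono Icc_subset_Ici_self).integrableOn_Icc).mono_set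
      Ioc_subset_Icc_self
  have hfn_cont : ContinuousOn (fun s => NormedSpace.exp ((-s) • 𝒜) (f s)) (Ici t₀) :=
    ((hexpcont (fun s => -s) continuous_neg).continuousOn).clm_apply hfc
  have hfn_ii : ∀ u, t₀ ≤ u →
      IntervalIntegrable (fun s => NormedSpace.exp ((-s) • 𝒜) (f s)) volume t₀ u := by
    intro u hu
    apply ContinuousOn.intervalIntegrable
    rw [uIcc_of_le hu]
    exact hfn_cont.mono Icc_subset_Ici_self
  set c₀ : EuclideanSpace ℝ (Fin N) :=
    ∫ s in Ioi t₀, NormedSpace.exp ((-s) • 𝒜) (P₁ (f s)) with hc₀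
  have hsplit : ∀ u, t₀ ≤ u →
      (∫ s in Ioi u, NormedSpace.exp ((-s) • 𝒜) (P₁ (f s)))
        = c₀ - ∫ s in Ioc t₀ u, NormedSpace.exp ((-s) • 𝒜) (P₁ (f s)) := by
    intro u hu
    have h := setIntegral_union (Ioc_disjoint_Ioi le_rfl) measurableSet_Ioi
      (hIocInt P₁ u hu) (hIntNeg u hu)
    rw [Ioc_union_Ioi_eq_Ioi hu] at h
    rw [hc₀, h]
    abel
  have hsum' : ∀ x : EuclideanSpace ℝ (Fin N), (P₂ + P₃) x + P₁ x = x := by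
    intro x
    have h := congrArg
      (fun (L : EuclideanSpace ℝ (Fin N) →L[ℝ] EuclideanSpace ℝ (Fin N)) => L x) hsum
    simp only [ContinuousLinearMap.add_apply, ContinuousLinearMap.one_apply] at h ⊢
    calc P₂ x + P₃ x + P₁ x = P₁ x + P₂ x + P₃ x := by abel
      _ = x := h
  have hval : ∀ u, t₀ ≤ u →
      ((∫ s in Ioc t₀ u, NormedSpace.exp ((u - s) • 𝒜) ((P₂ + P₃) (f s)))
        - ∫ s in Ioi u, NormedSpace.exp ((u - s) • 𝒜) (P₁ (f s)))
      = NormedSpace.exp (u • 𝒜)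
          ((∫ s in Ioc t₀ u, NormedSpace.exp ((-s) • 𝒜) (f s)) - c₀) := by
    intro u hu
    have hrw : ∀ (Q : EuclideanSpace ℝ (Fin N) →L[ℝ] EuclideanSpace ℝ (Fin N)) (s : ℝ),
        NormedSpace.exp ((u - s) • 𝒜) (Q (f s))
          = NormedSpace.exp (u • 𝒜) (NormedSpace.exp ((-s) • 𝒜) (Q (f s))) := by
      intro Q s
      rw [show (u - s : ℝ) = u + (-s) by ring, greenAux_exp_add]; rfl
    have h1 : (∫ s in Ioc t₀ u, NormedSpace.exp ((u - s) • 𝒜) ((P₂ + P₃) (f s)))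
        = NormedSpace.exp (u • 𝒜)
            (∫ s in Ioc t₀ u, NormedSpace.exp ((-s) • 𝒜) ((P₂ + P₃) (f s))) := by
      simp_rw [hrw (P₂ + P₃)]
      exact ContinuousLinearMap.integral_comp_comm _ (hIocInt (P₂ + P₃) u hu)
    have h2 : (∫ s in Ioi u, NormedSpace.exp ((u - s) • 𝒜) (P₁ (f s)))
        = NormedSpace.exp (u • 𝒜)
            (∫ s in Ioi u, NormedSpace.exp ((-s) • 𝒜) (P₁ (f s))) := by
      simp_rw [hrw P₁]
      exact ContinuousLinearMap.integral_comp_comm _ (hIntNeg u hu)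
    have h3 : (∫ s in Ioc t₀ u, NormedSpace.exp ((-s) • 𝒜) ((P₂ + P₃) (f s)))
          + (∫ s in Ioc t₀ u, NormedSpace.exp ((-s) • 𝒜) (P₁ (f s)))
        = ∫ s in Ioc t₀ u, NormedSpace.exp ((-s) • 𝒜) (f s) := by
      rw [← integral_add (hIocInt (P₂ + P₃) u hu) (hIocInt P₁ u hu)]
      congr 1; funext s
      rw [← map_add, hsum' (f s)]
    rw [h1, h2, hsplit u hu, ← map_sub]
    congr 1
    rw [← h3]
    abel
  refine ⟨fun t ht => key1 t ht, fun t ht => ?_, fun t ht => ?_⟩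
  · -- the derivative
    have ht' : t₀ ≤ t := ht
    have hmeasI : AEStronglyMeasurable (fun s => NormedSpace.exp ((-s) • 𝒜) (f s))
        (volume.restrict (Ici t₀)) := hfn_cont.aestronglyMeasurable measurableSet_Ici
    have hFTC : HasDerivWithinAt
        (fun u => ∫ s in t₀..u, NormedSpace.exp ((-s) • 𝒜) (f s))
        (NormedSpace.exp ((-t) • 𝒜) (f t)) (Ici t₀) t := by
      rcases eq_or_lt_of_le ht' with heq | hlt
      · subst heq
        exact intervalIntegral.integral_hasDerivWithinAt_right (hfn_ii t₀ le_rfl)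
          ⟨Ici t₀, mem_of_superset self_mem_nhdsWithin Ioi_subset_Ici_self, hmeasI⟩
          ((hfn_cont t₀ Set.self_mem_Ici).mono Ioi_subset_Ici_self)
      · exact (intervalIntegral.integral_hasDerivAt_right (hfn_ii t ht')
          ⟨Ici t₀, Ici_mem_nhds hlt, hmeasI⟩
          (hfn_cont.continuousAt (Ici_mem_nhds hlt))).hasDerivWithinAt
    have hgd := hFTC.sub_const c₀
    have hBd := (hasDerivAt_exp_smul_const' (𝕂 := ℝ) 𝒜 t).hasDerivWithinAt (s := Ici t₀)
    have hyd := hBd.clm_apply hgd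
    have hYeq : ∀ u ∈ Ici t₀,
        ((∫ s in Ioc t₀ u, NormedSpace.exp ((u - s) • 𝒜) ((P₂ + P₃) (f s)))
          - ∫ s in Ioi u, NormedSpace.exp ((u - s) • 𝒜) (P₁ (f s)))
        = NormedSpace.exp (u • 𝒜)
            ((∫ s in t₀..u, NormedSpace.exp ((-s) • 𝒜) (f s)) - c₀) := by
      intro u hu
      rw [intervalIntegral.integral_of_le hu]
      exact hval u hu
    have hDval : (𝒜 * NormedSpace.exp (t • 𝒜))
          ((∫ s in t₀..t, NormedSpace.exp ((-s) • 𝒜) (f s)) - c₀)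
        + NormedSpace.exp (t • 𝒜) (NormedSpace.exp ((-t) • 𝒜) (f t))
        = 𝒜 ((∫ s in Ioc t₀ t, NormedSpace.exp ((t - s) • 𝒜) ((P₂ + P₃) (f s)))
            - ∫ s in Ioi t, NormedSpace.exp ((t - s) • 𝒜) (P₁ (f s))) + f t := by
      rw [ContinuousLinearMap.mul_apply, ← hYeq t ht, greenAux_exp_cancel]
    rw [hDval] at hyd
    exact hyd.congr hYeq (hYeq t ht)
  · -- the bound
    have ht' : t₀ ≤ t := ht
    have hτ : (0:ℝ) ≤ t - t₀ := by linarith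
    -- bound for the P₁ part
    have hB : ‖∫ s in Ioi t, NormedSpace.exp ((t - s) • 𝒜) (P₁ (f s))‖
        ≤ K * M_f * Real.exp (-t) / (1 + γ₁) := by
      have hb := norm_integral_le_of_norm_le (hdomB t)
        ((ae_restrict_iff' measurableSet_Ioi).2 (ae_of_all _ (hptB t ht')))
      have hint := greenAux_integral_exp (1+γ₁) t hγ1'
      have e2 : Real.exp (γ₁ * t) * Real.exp (-(1+γ₁) * t) = Real.exp (-t) := by
        rw [← Real.exp_add]; congr 1; ring
      calc ‖∫ s in Ioi t, NormedSpace.exp ((t - s) • 𝒜) (P₁ (f s))‖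
          ≤ ∫ s in Ioi t, (K * M_f * Real.exp (γ₁ * t)) * Real.exp (-(1+γ₁) * s) := hb
        _ = (K * M_f * Real.exp (γ₁ * t)) * (Real.exp (-(1+γ₁) * t) / (1+γ₁)) := by
            rw [integral_const_mul, hint]
        _ = K * M_f * Real.exp (-t) / (1 + γ₁) := by
            linear_combination (K * M_f / (1+γ₁)) * e2
    -- pointwise bound for the (P₂+P₃) part
    have hptA : ∀ s ∈ Ioc t₀ t, ‖NormedSpace.exp ((t - s) • 𝒜) ((P₂ + P₃) (f s))‖
        ≤ (M_f * Real.exp (-t)) * (2*K + K * (t - s) ^ (r-1)) := by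
      intro s hs
      obtain ⟨hs1, hs2⟩ := hs
      have hts : (0:ℝ) ≤ t - s := by linarith
      have hfs : ‖f s‖ ≤ M_f * Real.exp (-s) := hfb s (le_of_lt hs1)
      have hrp : (0:ℝ) ≤ (t - s) ^ (r-1) := Real.rpow_nonneg hts _
      have h2 : ‖NormedSpace.exp ((t - s) • 𝒜) (P₂ (f s))‖
          ≤ (K * (1 + (t - s) ^ (r-1)) * Real.exp (-(t-s))) * (M_f * Real.exp (-s)) := by
        calc ‖NormedSpace.exp ((t - s) • 𝒜) (P₂ (f s))‖
            = ‖(NormedSpace.exp ((t - s) • 𝒜) ∘L P₂) (f s)‖ := rfl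
          _ ≤ ‖NormedSpace.exp ((t - s) • 𝒜) ∘L P₂‖ * ‖f s‖ :=
              ContinuousLinearMap.le_opNorm _ _
          _ ≤ _ := mul_le_mul (hb2 (t - s) hts) hfs (norm_nonneg _)
              (mul_nonneg (mul_nonneg hK.le (by linarith)) (Real.exp_pos _).le)
      have h3 : ‖NormedSpace.exp ((t - s) • 𝒜) (P₃ (f s))‖
          ≤ (K * Real.exp (-(t-s))) * (M_f * Real.exp (-s)) := by
        have hmono : Real.exp (γ₂ * (t - s)) ≤ Real.exp (-(t-s)) := by
          apply Real.exp_le_exp.2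
          nlinarith [mul_le_mul_of_nonneg_right hγ₂.le hts]
        calc ‖NormedSpace.exp ((t - s) • 𝒜) (P₃ (f s))‖
            = ‖(NormedSpace.exp ((t - s) • 𝒜) ∘L P₃) (f s)‖ := rfl
          _ ≤ ‖NormedSpace.exp ((t - s) • 𝒜) ∘L P₃‖ * ‖f s‖ :=
              ContinuousLinearMap.le_opNorm _ _
          _ ≤ (K * Real.exp (γ₂ * (t - s))) * (M_f * Real.exp (-s)) :=
              mul_le_mul (hb3 (t - s) hts) hfs (norm_nonneg _)
                (mul_nonneg hK.le (Real.exp_pos _).le)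
          _ ≤ (K * Real.exp (-(t-s))) * (M_f * Real.exp (-s)) := by
              exact mul_le_mul_of_nonneg_right
                (mul_le_mul_of_nonneg_left hmono hK.le) (by positivity)
      have e3 : Real.exp (-(t-s)) * Real.exp (-s) = Real.exp (-t) := by
        rw [← Real.exp_add]; congr 1; ring
      calc ‖NormedSpace.exp ((t - s) • 𝒜) ((P₂ + P₃) (f s))‖
          = ‖NormedSpace.exp ((t - s) • 𝒜) (P₂ (f s))
              + NormedSpace.exp ((t - s) • 𝒜) (P₃ (f s))‖ := by
            rw [ContinuousLinearMap.add_apply, map_add]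
        _ ≤ ‖NormedSpace.exp ((t - s) • 𝒜) (P₂ (f s))‖
              + ‖NormedSpace.exp ((t - s) • 𝒜) (P₃ (f s))‖ := norm_add_le _ _
        _ ≤ (K * (1 + (t - s) ^ (r-1)) * Real.exp (-(t-s))) * (M_f * Real.exp (-s))
              + (K * Real.exp (-(t-s))) * (M_f * Real.exp (-s)) := add_le_add h2 h3
        _ = (M_f * Real.exp (-t)) * (2*K + K * (t - s) ^ (r-1)) := by
            linear_combination (M_f * (K * (2 + (t - s) ^ (r-1)))) * e3
    -- integrability of the bound
    have hrpow_ii : IntervalIntegrable (fun s => (t - s) ^ (r-1)) volume t₀ t := by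
      have h0 : IntervalIntegrable (fun x : ℝ => x ^ (r-1)) volume (t - t) (t - t₀) :=
        intervalIntegral.intervalIntegrable_rpow (Or.inl (by linarith))
      simpa [sub_sub_cancel] using (h0.comp_sub_left t).symm
    have h1 : IntegrableOn (fun s => (t - s) ^ (r-1)) (Ioc t₀ t) :=
      (intervalIntegrable_iff_integrableOn_Ioc_of_le ht').1 hrpow_ii
    have hgInt : IntegrableOn
        (fun s => (M_f * Real.exp (-t)) * (2*K + K * (t - s) ^ (r-1))) (Ioc t₀ t) := by
      exact (((integrableOn_const measure_Ioc_lt_top.ne).add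
        (h1.const_mul K)).const_mul _)
    have hA : ‖∫ s in Ioc t₀ t, NormedSpace.exp ((t - s) • 𝒜) ((P₂ + P₃) (f s))‖
        ≤ (M_f * Real.exp (-t)) * (2*K*(t-t₀) + K * ((t-t₀)^r / r)) := by
      have hb := norm_integral_le_of_norm_le hgInt
        ((ae_restrict_iff' measurableSet_Ioc).2 (ae_of_all _ hptA))
      refine hb.trans (le_of_eq ?_)
      rw [← intervalIntegral.integral_of_le ht', intervalIntegral.integral_const_mul]
      congr 1
      have hval2 : (∫ s in t₀..t, (t - s) ^ (r-1)) = (t-t₀)^r / r := by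
        rw [intervalIntegral.integral_comp_sub_left (fun x => x ^ (r-1)) t, sub_self,
          integral_rpow (Or.inl (by linarith : (-1:ℝ) < r - 1))]
        rw [show r - 1 + 1 = r by ring, Real.zero_rpow (by linarith : r ≠ 0)]
        ring
      rw [intervalIntegral.integral_add intervalIntegrable_const (hrpow_ii.const_mul K),
        intervalIntegral.integral_const, intervalIntegral.integral_const_mul, hval2]
      simp [smul_eq_mul]
      ring
    have h1' : t - t₀ ≤ 1 + (t-t₀)^r := greenAux_le_one_add_rpow hτ hr
    have h2' : (0:ℝ) ≤ (t-t₀)^r := Real.rpow_nonneg hτ _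
    have hMe : (0:ℝ) < M_f * Real.exp (-t) := by positivity
    have hs : 2*K*(t-t₀) + K/r*(t-t₀)^r + K/(1+γ₁)
        ≤ (2*K + K/r + K/(1+γ₁)) * (1 + (t-t₀)^r) := by
      have f1 : (0:ℝ) ≤ 2*K*(1 + (t-t₀)^r - (t-t₀)) := by nlinarith
      have f2 : (0:ℝ) ≤ K/r := by positivity
      have f3 : (0:ℝ) ≤ (K/(1+γ₁))*(t-t₀)^r := by positivity
      nlinarith [f1, f2, f3]
    calc ‖(∫ s in Ioc t₀ t, NormedSpace.exp ((t - s) • 𝒜) ((P₂ + P₃) (f s)))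
          - ∫ s in Ioi t, NormedSpace.exp ((t - s) • 𝒜) (P₁ (f s))‖
        ≤ ‖∫ s in Ioc t₀ t, NormedSpace.exp ((t - s) • 𝒜) ((P₂ + P₃) (f s))‖
          + ‖∫ s in Ioi t, NormedSpace.exp ((t - s) • 𝒜) (P₁ (f s))‖ := norm_sub_le _ _
      _ ≤ (M_f * Real.exp (-t)) * (2*K*(t-t₀) + K * ((t-t₀)^r / r))
          + K * M_f * Real.exp (-t) / (1 + γ₁) := add_le_add hA hB
      _ = (M_f * Real.exp (-t)) * (2*K*(t-t₀) + K/r*(t-t₀)^r + K/(1+γ₁)) := by ring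
      _ ≤ (M_f * Real.exp (-t)) * ((2*K + K/r + K/(1+γ₁)) * (1 + (t-t₀)^r)) :=
          mul_le_mul_of_nonneg_left hs hMe.le
      _ = (2*K + K/r + K/(1+γ₁)) * M_f * Real.exp (-t) * (1 + (t - t₀)^r) := by ring
end

section
/- If, in addition to the hypotheses above, the function f satisfies e^{t}·f(t) → 0 as t → ∞ (i.e., f(t) = o(e^{−t})), then the solution y(t) := ∫_{t₀}^{t} e^{𝒜(t−s)}(P₂+P₃)f(s) ds − ∫_{t}^{∞} e^{𝒜(t−s)}P₁ f(s) ds satisfies e^{t}·t^{−r}·y(t) → 0 as t → ∞ (i.e., y(t) = o(t^r e^{−t})). -/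
open MeasureTheory Set Filter
open scoped Topology

lemma my_integral_exp_neg_mul_Ioi {b : ℝ} (hb : 0 < b) (t : ℝ) :
    ∫ s in Set.Ioi t, Real.exp (-b * s) = Real.exp (-b * t) / b := by
  have h := MeasureTheory.integral_comp_mul_right_Ioi (fun x => Real.exp (-x)) t hb
  simp only [smul_eq_mul] at h
  have h2 : (∫ s in Set.Ioi t, Real.exp (-b * s)) = ∫ s in Set.Ioi t, Real.exp (-(s * b)) := by
    congr 1; funext s; ring_nf
  rw [h2, h, integral_exp_neg_Ioi]
  rw [show -(t*b) = -b*t by ring]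
  field_simp

set_option maxHeartbeats 2000000 in
/-- if moreover `f(t) = o(e^{-t})` as `t → ∞`, then the solution
`y(t) = ∫_{t₀}^t e^{𝒜(t-s)}(P₂+P₃) f(s) ds − ∫_t^∞ e^{𝒜(t-s)} P₁ f(s) ds`
satisfies `y(t) = o(t^r e^{-t})` as `t → ∞`. -/
theorem green_solution_littleO (N : ℕ) (hN : 1 ≤ N)
    (𝒜 P₁ P₂ P₃ : EuclideanSpace ℝ (Fin N) →L[ℝ] EuclideanSpace ℝ (Fin N))
    (K r γ₁ γ₂ : ℝ)
    (hK : 0 < K) (hr : 1 ≤ r) (hγ₁ : -1 < γ₁) (hγ₂ : γ₂ < -1)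
    (hP₁ : P₁ ∘L P₁ = P₁) (hP₂ : P₂ ∘L P₂ = P₂) (hP₃ : P₃ ∘L P₃ = P₃)
    (hsum : P₁ + P₂ + P₃ = 1)
    (h12 : P₁ ∘L P₂ = 0) (h21 : P₂ ∘L P₁ = 0) (h13 : P₁ ∘L P₃ = 0)
    (h31 : P₃ ∘L P₁ = 0) (h23 : P₂ ∘L P₃ = 0) (h32 : P₃ ∘L P₂ = 0)
    (hexp₁ : ∀ τ ≤ (0 : ℝ), ‖NormedSpace.exp (τ • 𝒜) ∘L P₁‖ ≤ K * Real.exp (γ₁ * τ))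
    (hexp₂ : ∀ τ ≥ (0 : ℝ),
      ‖NormedSpace.exp (τ • 𝒜) ∘L P₂‖ ≤ K * (1 + τ ^ (r - 1)) * Real.exp (-τ))
    (hexp₃ : ∀ τ ≥ (0 : ℝ), ‖NormedSpace.exp (τ • 𝒜) ∘L P₃‖ ≤ K * Real.exp (γ₂ * τ))
    (t₀ : ℝ) (ht₀ : 0 < t₀)
    (f : ℝ → EuclideanSpace ℝ (Fin N))
    (hfcont : ContinuousOn f (Set.Ici t₀))
    (M_f : ℝ) (hM_f : 0 < M_f)
    (hfbdd : ∀ t ≥ t₀, ‖f t‖ ≤ M_f * Real.exp (-t))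
    -- f(t) = o(e^{-t}) as t → ∞
    (hfo : Tendsto (fun t => Real.exp t • f t) atTop (𝓝 0)) :
    -- y(t) = o(t^r e^{-t}) as t → ∞
    Tendsto (fun t => (Real.exp t * t ^ (-r)) •
      ((∫ s in Set.Ioc t₀ t, NormedSpace.exp ((t - s) • 𝒜) ((P₂ + P₃) (f s)))
        - ∫ s in Set.Ioi t, NormedSpace.exp ((t - s) • 𝒜) (P₁ (f s))))
      atTop (𝓝 0) := by
  have hb : (0:ℝ) < 1 + γ₁ := by linarith
  -- continuity of integrands
  have hcont : ∀ (P : EuclideanSpace ℝ (Fin N) →L[ℝ] EuclideanSpace ℝ (Fin N)) (t : ℝ),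
      ContinuousOn (fun s => NormedSpace.exp ((t - s) • 𝒜) (P (f s))) (Set.Ici t₀) := by
    intro P t
    have h1 : Continuous fun s : ℝ => NormedSpace.exp ((t - s) • 𝒜) :=
      (continuous_iff_continuousAt.2 fun x => (NormedSpace.exp_analytic (𝕂 := ℝ) x).continuousAt).comp ((continuous_const.sub continuous_id).smul continuous_const)
    exact h1.continuousOn.clm_apply (P.continuous.comp_continuousOn hfcont)
  -- integrability on finite intervals
  have hintIoc : ∀ (P : EuclideanSpace ℝ (Fin N) →L[ℝ] EuclideanSpace ℝ (Fin N)) (t a b : ℝ),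
      t₀ ≤ a → IntegrableOn (fun s => NormedSpace.exp ((t - s) • 𝒜) (P (f s))) (Set.Ioc a b) := by
    intro P t a b ha
    have : Set.Icc a b ⊆ Set.Ici t₀ := fun x hx => le_trans ha hx.1
    exact (((hcont P t).mono this).integrableOn_Icc).mono_set Set.Ioc_subset_Icc_self
  -- pointwise bound for the P₁ part when s ≥ t
  have hp1bd : ∀ (t s : ℝ), t₀ ≤ s → t ≤ s →
      ‖NormedSpace.exp ((t - s) • 𝒜) (P₁ (f s))‖
        ≤ K * Real.exp (γ₁ * (t - s)) * ‖f s‖ := by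
    intro t s hs hts
    have h1 : ‖NormedSpace.exp ((t - s) • 𝒜) (P₁ (f s))‖
        = ‖(NormedSpace.exp ((t - s) • 𝒜) ∘L P₁) (f s)‖ := rfl
    rw [h1]
    calc ‖(NormedSpace.exp ((t - s) • 𝒜) ∘L P₁) (f s)‖
        ≤ ‖NormedSpace.exp ((t - s) • 𝒜) ∘L P₁‖ * ‖f s‖ :=
          ContinuousLinearMap.le_opNorm _ _
      _ ≤ K * Real.exp (γ₁ * (t - s)) * ‖f s‖ := by
          apply mul_le_mul_of_nonneg_right (hexp₁ (t - s) (by linarith)) (norm_nonneg _)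
  -- integrability on `Ioi t`
  have hintIoi : ∀ t : ℝ, t₀ ≤ t →
      IntegrableOn (fun s => NormedSpace.exp ((t - s) • 𝒜) (P₁ (f s))) (Set.Ioi t) := by
    intro t ht
    have hg : IntegrableOn
        (fun s => (K * M_f * Real.exp (γ₁ * t)) * Real.exp (-(1 + γ₁) * s)) (Set.Ioi t) :=
      (exp_neg_integrableOn_Ioi t hb).const_mul _
    refine hg.integrable.mono' (((hcont P₁ t).mono fun x hx => le_trans ht (le_of_lt hx)).aestronglyMeasurable measurableSet_Ioi) ?_
    filter_upwards [ae_restrict_mem measurableSet_Ioi] with s hs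
    have hs' : t ≤ s := le_of_lt hs
    have h2 : ‖f s‖ ≤ M_f * Real.exp (-s) := hfbdd s (le_trans ht hs')
    calc ‖NormedSpace.exp ((t - s) • 𝒜) (P₁ (f s))‖
        ≤ K * Real.exp (γ₁ * (t - s)) * ‖f s‖ := hp1bd t s (le_trans ht hs') hs'
      _ ≤ K * Real.exp (γ₁ * (t - s)) * (M_f * Real.exp (-s)) := by
          exact mul_le_mul_of_nonneg_left h2 (by positivity)
      _ = K * M_f * (Real.exp (γ₁ * (t - s)) * Real.exp (-s)) := by ring
      _ = (K * M_f * Real.exp (γ₁ * t)) * Real.exp (-(1 + γ₁) * s) := by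
          rw [← Real.exp_add, show γ₁ * (t - s) + -s = γ₁ * t + -(1 + γ₁) * s by ring,
            Real.exp_add]
          ring
  -- combined pointwise bound for the (P₂+P₃) part
  have hkey : ∀ (t s c : ℝ), 0 ≤ c → t₀ < s → s ≤ t → ‖f s‖ ≤ c * Real.exp (-s) →
      ‖NormedSpace.exp ((t - s) • 𝒜) ((P₂ + P₃) (f s))‖
        ≤ K * (2 + t ^ (r - 1)) * c * Real.exp (-t) := by
    intro t s c hc hs hst hfs
    have hτ : (0:ℝ) ≤ t - s := by linarith
    have hτt : t - s ≤ t := by linarith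
    have htpos : (0:ℝ) < t := by linarith
    have hcomp : NormedSpace.exp ((t - s) • 𝒜) ∘L (P₂ + P₃)
        = NormedSpace.exp ((t - s) • 𝒜) ∘L P₂ + NormedSpace.exp ((t - s) • 𝒜) ∘L P₃ := by
      ext x; simp
    have hop : ‖NormedSpace.exp ((t - s) • 𝒜) ∘L (P₂ + P₃)‖
        ≤ K * (2 + t ^ (r - 1)) * Real.exp (-(t - s)) := by
      rw [hcomp]
      refine le_trans (norm_add_le _ _) ?_
      have h2 := hexp₂ (t - s) hτ
      have h3 := hexp₃ (t - s) hτ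
      have h4 : (t - s) ^ (r - 1) ≤ t ^ (r - 1) :=
        Real.rpow_le_rpow hτ hτt (by linarith)
      have h5 : Real.exp (γ₂ * (t - s)) ≤ Real.exp (-(t - s)) := by
        apply Real.exp_le_exp.mpr; nlinarith
      have h6 : (0:ℝ) < Real.exp (-(t - s)) := Real.exp_pos _
      have h2' : ‖NormedSpace.exp ((t - s) • 𝒜) ∘L P₂‖
          ≤ K * (1 + t ^ (r - 1)) * Real.exp (-(t - s)) := by
        refine le_trans h2 (mul_le_mul_of_nonneg_right ?_ h6.le)
        exact mul_le_mul_of_nonneg_left (by linarith) hK.le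
      have h3' : ‖NormedSpace.exp ((t - s) • 𝒜) ∘L P₃‖ ≤ K * Real.exp (-(t - s)) :=
        le_trans h3 (mul_le_mul_of_nonneg_left h5 hK.le)
      have hsum' : K * (1 + t ^ (r - 1)) * Real.exp (-(t - s)) + K * Real.exp (-(t - s))
          = K * (2 + t ^ (r - 1)) * Real.exp (-(t - s)) := by ring
      linarith
    have h1 : ‖NormedSpace.exp ((t - s) • 𝒜) ((P₂ + P₃) (f s))‖
        = ‖(NormedSpace.exp ((t - s) • 𝒜) ∘L (P₂ + P₃)) (f s)‖ := rfl
    rw [h1]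
    calc ‖(NormedSpace.exp ((t - s) • 𝒜) ∘L (P₂ + P₃)) (f s)‖
        ≤ ‖NormedSpace.exp ((t - s) • 𝒜) ∘L (P₂ + P₃)‖ * ‖f s‖ :=
          ContinuousLinearMap.le_opNorm _ _
      _ ≤ (K * (2 + t ^ (r - 1)) * Real.exp (-(t - s))) * (c * Real.exp (-s)) := by
          apply mul_le_mul hop hfs (norm_nonneg _)
          have := Real.rpow_nonneg htpos.le (r - 1)
          positivity
      _ = K * (2 + t ^ (r - 1)) * c * (Real.exp (-(t - s)) * Real.exp (-s)) := by ring
      _ = K * (2 + t ^ (r - 1)) * c * Real.exp (-t) := by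
          rw [← Real.exp_add, show -(t - s) + -s = -t by ring]
  -- main ε-argument
  rw [NormedAddCommGroup.tendsto_nhds_zero]
  intro ε hε
  set C : ℝ := 3 * K + K / (1 + γ₁) with hCdef
  have hC : 0 < C := by
    have : 0 < K / (1 + γ₁) := div_pos hK hb
    have h3K : 0 < 3 * K := by linarith
    rw [hCdef]; linarith
  set δ : ℝ := ε / (2 * C) with hδdef
  have hδ : 0 < δ := div_pos hε (by linarith)
  obtain ⟨T₁, hT₁⟩ := eventually_atTop.mp (NormedAddCommGroup.tendsto_nhds_zero.mp hfo δ hδ)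
  set T : ℝ := max T₁ t₀ with hTdef
  have hTt₀ : t₀ ≤ T := le_max_right _ _
  have hfsmall : ∀ s, T ≤ s → ‖f s‖ ≤ δ * Real.exp (-s) := by
    intro s hsT
    have h := hT₁ s (le_trans (le_max_left _ _) hsT)
    rw [norm_smul, Real.norm_eq_abs, Real.abs_exp] at h
    calc ‖f s‖ = (Real.exp s)⁻¹ * (Real.exp s * ‖f s‖) := by
          field_simp
      _ ≤ (Real.exp s)⁻¹ * δ := mul_le_mul_of_nonneg_left h.le (by positivity)
      _ = δ * Real.exp (-s) := by rw [Real.exp_neg]; ring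
  set A : ℝ := 3 * K * M_f * (T - t₀) with hAdef
  have hA0 : 0 ≤ A := by
    have : 0 ≤ T - t₀ := by linarith
    have hKM : 0 ≤ 3 * K * M_f := by positivity
    rw [hAdef]; exact mul_nonneg hKM this
  filter_upwards [eventually_ge_atTop (max (T + 1) (1 + 2 * A / ε))] with t ht
  have htT1 : T + 1 ≤ t := le_trans (le_max_left _ _) ht
  have htA : 1 + 2 * A / ε ≤ t := le_trans (le_max_right _ _) ht
  have ht1 : 1 ≤ t := by linarith
  have ht0 : (0:ℝ) < t := by linarith
  have htT : T ≤ t := by linarith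
  have ht₀t : t₀ ≤ t := le_trans hTt₀ htT
  -- abbreviations
  have hy0 : 0 ≤ t ^ (r - 1) := Real.rpow_nonneg ht0.le _
  have hx0 : 0 < t ^ (-r) := Real.rpow_pos_of_pos ht0 _
  -- split the Ioc integral
  have hi1 : IntegrableOn (fun s => NormedSpace.exp ((t - s) • 𝒜) ((P₂ + P₃) (f s)))
      (Set.Ioc t₀ T) volume := hintIoc _ t t₀ T le_rfl
  have hi2 : IntegrableOn (fun s => NormedSpace.exp ((t - s) • 𝒜) ((P₂ + P₃) (f s)))
      (Set.Ioc T t) volume := hintIoc _ t T t hTt₀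
  have hsplit : (∫ s in Set.Ioc t₀ t, NormedSpace.exp ((t - s) • 𝒜) ((P₂ + P₃) (f s)))
      = (∫ s in Set.Ioc t₀ T, NormedSpace.exp ((t - s) • 𝒜) ((P₂ + P₃) (f s)))
        + ∫ s in Set.Ioc T t, NormedSpace.exp ((t - s) • 𝒜) ((P₂ + P₃) (f s)) := by
    rw [← Set.Ioc_union_Ioc_eq_Ioc hTt₀ htT,
      setIntegral_union (Set.Ioc_disjoint_Ioc_of_le le_rfl) measurableSet_Ioc hi1 hi2]
  -- bound on Ioc t₀ T
  have hbound1 : ‖∫ s in Set.Ioc t₀ T, NormedSpace.exp ((t - s) • 𝒜) ((P₂ + P₃) (f s))‖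
      ≤ (K * (2 + t ^ (r - 1)) * M_f * Real.exp (-t)) * (T - t₀) := by
    have h := norm_setIntegral_le_of_norm_le_const_ae' (μ := volume) (s := Set.Ioc t₀ T)
      (measure_Ioc_lt_top) (C := K * (2 + t ^ (r - 1)) * M_f * Real.exp (-t))
      (ae_of_all _ (fun s hs => hkey t s M_f hM_f.le hs.1 (le_trans hs.2 htT) (hfbdd s hs.1.le)))
    rwa [measureReal_def, Real.volume_Ioc, ENNReal.toReal_ofReal (by linarith)] at h
  -- bound on Ioc T t
  have hbound2 : ‖∫ s in Set.Ioc T t, NormedSpace.exp ((t - s) • 𝒜) ((P₂ + P₃) (f s))‖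
      ≤ (K * (2 + t ^ (r - 1)) * δ * Real.exp (-t)) * (t - T) := by
    have h := norm_setIntegral_le_of_norm_le_const_ae' (μ := volume) (s := Set.Ioc T t)
      (measure_Ioc_lt_top) (C := K * (2 + t ^ (r - 1)) * δ * Real.exp (-t))
      (ae_of_all _ (fun s hs => hkey t s δ hδ.le (lt_of_le_of_lt hTt₀ hs.1) hs.2
        (hfsmall s hs.1.le)))
    rwa [measureReal_def, Real.volume_Ioc, ENNReal.toReal_ofReal (by linarith)] at h
  -- bound on Ioi t
  have hbound3 : ‖∫ s in Set.Ioi t, NormedSpace.exp ((t - s) • 𝒜) (P₁ (f s))‖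
      ≤ K * δ / (1 + γ₁) * Real.exp (-t) := by
    have hmaj : ∀ᵐ s ∂(volume.restrict (Set.Ioi t)),
        ‖NormedSpace.exp ((t - s) • 𝒜) (P₁ (f s))‖
          ≤ (K * δ * Real.exp (γ₁ * t)) * Real.exp (-(1 + γ₁) * s) := by
      filter_upwards [ae_restrict_mem measurableSet_Ioi] with s hs
      have hs' : t ≤ s := le_of_lt hs
      calc ‖NormedSpace.exp ((t - s) • 𝒜) (P₁ (f s))‖
          ≤ K * Real.exp (γ₁ * (t - s)) * ‖f s‖ := hp1bd t s (le_trans ht₀t hs') hs'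
        _ ≤ K * Real.exp (γ₁ * (t - s)) * (δ * Real.exp (-s)) :=
            mul_le_mul_of_nonneg_left (hfsmall s (le_trans htT hs')) (by positivity)
        _ = K * δ * (Real.exp (γ₁ * (t - s)) * Real.exp (-s)) := by ring
        _ = (K * δ * Real.exp (γ₁ * t)) * Real.exp (-(1 + γ₁) * s) := by
            rw [← Real.exp_add, show γ₁ * (t - s) + -s = γ₁ * t + -(1 + γ₁) * s by ring,
              Real.exp_add]
            ring
    have hgint : Integrable (fun s => (K * δ * Real.exp (γ₁ * t)) * Real.exp (-(1 + γ₁) * s))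
        (volume.restrict (Set.Ioi t)) := (exp_neg_integrableOn_Ioi t hb).const_mul _
    have h := norm_integral_le_of_norm_le hgint hmaj
    have hval : (∫ s in Set.Ioi t, (K * δ * Real.exp (γ₁ * t)) * Real.exp (-(1 + γ₁) * s))
        = K * δ / (1 + γ₁) * Real.exp (-t) := by
      rw [MeasureTheory.integral_const_mul, my_integral_exp_neg_mul_Ioi hb]
      rw [div_eq_mul_inv, div_eq_mul_inv]
      have hE : Real.exp (γ₁ * t) * Real.exp (-(1 + γ₁) * t) = Real.exp (-t) := by
        rw [← Real.exp_add, show γ₁ * t + -(1 + γ₁) * t = -t by ring]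
      calc K * δ * Real.exp (γ₁ * t) * (Real.exp (-(1 + γ₁) * t) * (1 + γ₁)⁻¹)
          = K * δ * (1 + γ₁)⁻¹ * (Real.exp (γ₁ * t) * Real.exp (-(1 + γ₁) * t)) := by ring
        _ = K * δ * (1 + γ₁)⁻¹ * Real.exp (-t) := by rw [hE]
    rw [hval] at h
    exact h
  -- rpow estimates
  have hxu : t ^ (-r) ≤ t⁻¹ := by
    have h := Real.rpow_le_rpow_of_exponent_le ht1 (show -r ≤ (-1:ℝ) by linarith)
    rwa [Real.rpow_neg_one] at h
  have hxy : t ^ (-r) * t ^ (r - 1) = t⁻¹ := by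
    rw [← Real.rpow_add ht0, show -r + (r - 1) = (-1:ℝ) by ring, Real.rpow_neg_one]
  have hx1 : t ^ (-r) ≤ 1 := Real.rpow_le_one_of_one_le_of_nonpos ht1 (by linarith)
  have hee : Real.exp t * Real.exp (-t) = 1 := by
    rw [← Real.exp_add]; simp
  have h3u : 2 * t ^ (-r) + t ^ (-r) * t ^ (r - 1) ≤ 3 * t⁻¹ := by
    rw [hxy]; linarith
  have hKMT : 0 ≤ K * M_f * (T - t₀) := by
    have : 0 ≤ T - t₀ := by linarith
    positivity
  -- the three key scaled bounds
  have key1 : Real.exp t * t ^ (-r) * ((K * (2 + t ^ (r - 1)) * M_f * Real.exp (-t)) * (T - t₀))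
      ≤ A / t := by
    rw [show Real.exp t * t ^ (-r) * ((K * (2 + t ^ (r - 1)) * M_f * Real.exp (-t)) * (T - t₀))
        = (Real.exp t * Real.exp (-t)) * ((2 * t ^ (-r) + t ^ (-r) * t ^ (r - 1))
            * (K * M_f * (T - t₀))) by ring, hee, one_mul, hAdef, div_eq_mul_inv]
    calc (2 * t ^ (-r) + t ^ (-r) * t ^ (r - 1)) * (K * M_f * (T - t₀))
        ≤ (3 * t⁻¹) * (K * M_f * (T - t₀)) := mul_le_mul_of_nonneg_right h3u hKMT
      _ = 3 * K * M_f * (T - t₀) * t⁻¹ := by ring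
  have key2 : Real.exp t * t ^ (-r) * ((K * (2 + t ^ (r - 1)) * δ * Real.exp (-t)) * (t - T))
      ≤ 3 * (K * δ) := by
    rw [show Real.exp t * t ^ (-r) * ((K * (2 + t ^ (r - 1)) * δ * Real.exp (-t)) * (t - T))
        = (Real.exp t * Real.exp (-t)) * (((2 * t ^ (-r) + t ^ (-r) * t ^ (r - 1)) * (t - T))
            * (K * δ)) by ring, hee, one_mul]
    have hstep : (2 * t ^ (-r) + t ^ (-r) * t ^ (r - 1)) * (t - T) ≤ 3 := by
      have h1 : (2 * t ^ (-r) + t ^ (-r) * t ^ (r - 1)) * (t - T) ≤ (3 * t⁻¹) * t := by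
        apply mul_le_mul h3u (by linarith) (by linarith) (by positivity)
      have h2 : (3 * t⁻¹) * t = 3 := by field_simp
      linarith
    exact mul_le_mul_of_nonneg_right hstep (by positivity)
  have key3 : Real.exp t * t ^ (-r) * (K * δ / (1 + γ₁) * Real.exp (-t))
      ≤ K * δ / (1 + γ₁) := by
    rw [show Real.exp t * t ^ (-r) * (K * δ / (1 + γ₁) * Real.exp (-t))
        = (Real.exp t * Real.exp (-t)) * (t ^ (-r) * (K * δ / (1 + γ₁))) by ring, hee, one_mul]
    have hq : 0 ≤ K * δ / (1 + γ₁) := div_nonneg (by positivity) hb.le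
    nlinarith
  have key4 : A / t < ε / 2 := by
    rw [div_lt_iff₀ ht0]
    nlinarith [div_nonneg hA0 hε.le, (div_le_iff₀ hε).mp (le_refl (2 * A / ε))]
  have key5 : 3 * (K * δ) + K * δ / (1 + γ₁) = ε / 2 := by
    rw [hδdef, hCdef]
    field_simp
  -- assemble
  rw [norm_smul, Real.norm_eq_abs, abs_of_pos (mul_pos (Real.exp_pos t) hx0)]
  have hnorm : ‖(∫ s in Set.Ioc t₀ t, NormedSpace.exp ((t - s) • 𝒜) ((P₂ + P₃) (f s)))
        - ∫ s in Set.Ioi t, NormedSpace.exp ((t - s) • 𝒜) (P₁ (f s))‖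
      ≤ (K * (2 + t ^ (r - 1)) * M_f * Real.exp (-t)) * (T - t₀)
        + (K * (2 + t ^ (r - 1)) * δ * Real.exp (-t)) * (t - T)
        + K * δ / (1 + γ₁) * Real.exp (-t) := by
    rw [hsplit]
    refine le_trans (norm_sub_le _ _) ?_
    have := norm_add_le (∫ s in Set.Ioc t₀ T, NormedSpace.exp ((t - s) • 𝒜) ((P₂ + P₃) (f s)))
      (∫ s in Set.Ioc T t, NormedSpace.exp ((t - s) • 𝒜) ((P₂ + P₃) (f s)))
    linarith
  calc Real.exp t * t ^ (-r) * ‖(∫ s in Set.Ioc t₀ t,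
          NormedSpace.exp ((t - s) • 𝒜) ((P₂ + P₃) (f s)))
        - ∫ s in Set.Ioi t, NormedSpace.exp ((t - s) • 𝒜) (P₁ (f s))‖
      ≤ Real.exp t * t ^ (-r) * ((K * (2 + t ^ (r - 1)) * M_f * Real.exp (-t)) * (T - t₀)
        + (K * (2 + t ^ (r - 1)) * δ * Real.exp (-t)) * (t - T)
        + K * δ / (1 + γ₁) * Real.exp (-t)) :=
        mul_le_mul_of_nonneg_left hnorm (by positivity)
    _ = Real.exp t * t ^ (-r) * ((K * (2 + t ^ (r - 1)) * M_f * Real.exp (-t)) * (T - t₀))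
        + Real.exp t * t ^ (-r) * ((K * (2 + t ^ (r - 1)) * δ * Real.exp (-t)) * (t - T))
        + Real.exp t * t ^ (-r) * (K * δ / (1 + γ₁) * Real.exp (-t)) := by ring
    _ < ε := by linarith
end

section
/- Let H : [t₀,∞) → Hom(ℝᴺ) and h : [t₀,∞) → ℝᴺ be continuous with ‖H(t)‖ ≤ M and ‖h(t)‖ ≤ m for all t ≥ t₀, where M > 0, m > 0. Assume t₀ > r and q := 2·C·M·t₀^r·e^{−t₀} < 1. Then the system v′(t) = 𝒜v(t) + e^{−t}(H(t)v(t) + h(t)) has a solution v on [t₀,∞) satisfying ‖v(t)‖ ≤ (2Cm/(1−q))·t^r·e^{−t} for all t ≥ t₀. -/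
open MeasureTheory Set Filter
open scoped Topology

/-- The Green operator
`G[f](t) = ∫_{t₀}^t e^{𝒜(t-s)}(P₂+P₃) f(s) ds − ∫_t^∞ e^{𝒜(t-s)} P₁ f(s) ds`. -/
noncomputable def greenOp {N : ℕ}
    (𝒜 P₁ P₂ P₃ : EuclideanSpace ℝ (Fin N) →L[ℝ] EuclideanSpace ℝ (Fin N))
    (t₀ : ℝ) (f : ℝ → EuclideanSpace ℝ (Fin N)) (t : ℝ) : EuclideanSpace ℝ (Fin N) :=
  (∫ s in Set.Ioc t₀ t, NormedSpace.exp ((t - s) • 𝒜) ((P₂ + P₃) (f s)))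
    - ∫ s in Set.Ioi t, NormedSpace.exp ((t - s) • 𝒜) (P₁ (f s))

theorem div_le_div_of_nonneg_right' {a b c : ℝ} (hab : a ≤ b) (hc : 0 < c) :
    a / c ≤ b / c := by gcongr

set_option maxHeartbeats 1000000 in
/-- existence of a solution `v` of `v' = 𝒜 v + e^{-t}(H(t) v + h(t))`
with `‖v(t)‖ ≤ (2Cm/(1-q)) t^r e^{-t}` on `[t₀, ∞)`, where `q = 2 C M t₀^r e^{-t₀} < 1`. -/
theorem perturbed_system_solution (N : ℕ) (hN : 1 ≤ N)
    (𝒜 P₁ P₂ P₃ : EuclideanSpace ℝ (Fin N) →L[ℝ] EuclideanSpace ℝ (Fin N))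
    (r t₀ : ℝ) (hr : 1 ≤ r) (ht₀ : 0 < t₀)
    (hP₁ : P₁ ∘L P₁ = P₁) (hP₂ : P₂ ∘L P₂ = P₂) (hP₃ : P₃ ∘L P₃ = P₃)
    (hsum : P₁ + P₂ + P₃ = 1)
    (h12 : P₁ ∘L P₂ = 0) (h21 : P₂ ∘L P₁ = 0) (h13 : P₁ ∘L P₃ = 0)
    (h31 : P₃ ∘L P₁ = 0) (h23 : P₂ ∘L P₃ = 0) (h32 : P₃ ∘L P₂ = 0)
    (C : ℝ) (hC : 0 < C)
    -- the property of C from the preceding lemma (Statement 1):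
    (hGreen : ∀ M_f > (0 : ℝ), ∀ f : ℝ → EuclideanSpace ℝ (Fin N),
      ContinuousOn f (Set.Ici t₀) →
      (∀ t ≥ t₀, ‖f t‖ ≤ M_f * Real.exp (-t)) →
      (∀ t ≥ t₀, IntegrableOn
          (fun s => NormedSpace.exp ((t - s) • 𝒜) (P₁ (f s))) (Set.Ioi t)) ∧
      (∀ t ∈ Set.Ici t₀,
        HasDerivWithinAt (greenOp 𝒜 P₁ P₂ P₃ t₀ f)
          (𝒜 (greenOp 𝒜 P₁ P₂ P₃ t₀ f t) + f t) (Set.Ici t₀) t) ∧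
      (∀ t ≥ t₀, ‖greenOp 𝒜 P₁ P₂ P₃ t₀ f t‖
          ≤ C * M_f * Real.exp (-t) * (1 + (t - t₀) ^ r)))
    (H : ℝ → EuclideanSpace ℝ (Fin N) →L[ℝ] EuclideanSpace ℝ (Fin N))
    (h : ℝ → EuclideanSpace ℝ (Fin N))
    (M m : ℝ) (hM : 0 < M) (hm : 0 < m)
    (hHcont : ContinuousOn H (Set.Ici t₀)) (hhcont : ContinuousOn h (Set.Ici t₀))
    (hHbdd : ∀ t ≥ t₀, ‖H t‖ ≤ M) (hhbdd : ∀ t ≥ t₀, ‖h t‖ ≤ m)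
    (ht₀r : r < t₀)
    (hq : 2 * C * M * t₀ ^ r * Real.exp (-t₀) < 1) :
    ∃ v : ℝ → EuclideanSpace ℝ (Fin N),
      (∀ t ∈ Set.Ici t₀,
        HasDerivWithinAt v
          (𝒜 (v t) + Real.exp (-t) • (H t (v t) + h t)) (Set.Ici t₀) t) ∧
      (∀ t ≥ t₀, ‖v t‖ ≤
        2 * C * m / (1 - 2 * C * M * t₀ ^ r * Real.exp (-t₀)) * t ^ r * Real.exp (-t)) := by
  classical
  have hr0 : (0:ℝ) ≤ r := by linarith
  have ht₀1 : (1:ℝ) < t₀ := lt_of_le_of_lt hr ht₀r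
  set q : ℝ := 2 * C * M * t₀ ^ r * Real.exp (-t₀) with hq_def
  have ht₀rpos : (0:ℝ) < t₀ ^ r := Real.rpow_pos_of_pos ht₀ r
  have hq0 : 0 < q := by
    rw [hq_def]; positivity
  have h1q : 0 < 1 - q := by linarith
  set K₀ : ℝ := 2 * C * m with hK₀_def
  set K : ℝ := K₀ / (1 - q) with hK_def
  have hK₀0 : 0 < K₀ := by rw [hK₀_def]; positivity
  have hK0 : 0 < K := by rw [hK_def]; positivity
  have trexp_nonneg : ∀ t, t₀ ≤ t → (0:ℝ) ≤ t ^ r * Real.exp (-t) := fun t ht =>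
    mul_nonneg (Real.rpow_nonneg (le_trans ht₀.le ht) r) (Real.exp_pos _).le
  -- fact A : t^r e^{-t} is decreasing past t₀
  have factA : ∀ t ≥ t₀, t ^ r * Real.exp (-t) ≤ t₀ ^ r * Real.exp (-t₀) := by
    intro t ht
    have ht0 : 0 < t := lt_of_lt_of_le ht₀ ht
    rw [Real.rpow_def_of_pos ht0, Real.rpow_def_of_pos ht₀, ← Real.exp_add, ← Real.exp_add]
    apply Real.exp_le_exp.2
    have hlog : Real.log t - Real.log t₀ ≤ (t - t₀) / t₀ := by
      rw [← Real.log_div (ne_of_gt ht0) (ne_of_gt ht₀)]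
      have h1 := Real.log_le_sub_one_of_pos (div_pos ht0 ht₀)
      have h2 : t / t₀ - 1 = (t - t₀) / t₀ := by field_simp
      linarith
    have h2 : r * (Real.log t - Real.log t₀) ≤ t - t₀ := by
      have e1 : r * (Real.log t - Real.log t₀) ≤ r * ((t - t₀) / t₀) :=
        mul_le_mul_of_nonneg_left hlog hr0
      have e2 : r * ((t - t₀) / t₀) ≤ t₀ * ((t - t₀) / t₀) :=
        mul_le_mul_of_nonneg_right (le_of_lt ht₀r) (div_nonneg (by linarith) ht₀.le)
      have e3 : t₀ * ((t - t₀) / t₀) = t - t₀ := by field_simp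
      linarith
    rw [mul_sub] at h2
    linarith
  -- fact B
  have factB : ∀ t ≥ t₀, 1 + (t - t₀) ^ r ≤ 2 * t ^ r := by
    intro t ht
    have h1t : (1:ℝ) ≤ t := le_trans (le_of_lt ht₀1) ht
    have e1 : (1:ℝ) ≤ t ^ r := by
      calc (1:ℝ) = 1 ^ r := (Real.one_rpow r).symm
        _ ≤ t ^ r := Real.rpow_le_rpow zero_le_one h1t hr0
    have e2 : (t - t₀) ^ r ≤ t ^ r :=
      Real.rpow_le_rpow (by linarith) (by linarith) hr0
    linarith
  -- cleaned up version of hGreen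
  have key : ∀ (Mf : ℝ), 0 < Mf → ∀ f : ℝ → EuclideanSpace ℝ (Fin N),
      ContinuousOn f (Set.Ici t₀) → (∀ t ≥ t₀, ‖f t‖ ≤ Mf * Real.exp (-t)) →
      (∀ t ≥ t₀, IntegrableOn
          (fun s => NormedSpace.exp ((t - s) • 𝒜) (P₁ (f s))) (Set.Ioi t)) ∧
      (∀ t ∈ Set.Ici t₀, HasDerivWithinAt (greenOp 𝒜 P₁ P₂ P₃ t₀ f)
          (𝒜 (greenOp 𝒜 P₁ P₂ P₃ t₀ f t) + f t) (Set.Ici t₀) t) ∧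
      (∀ t ≥ t₀, ‖greenOp 𝒜 P₁ P₂ P₃ t₀ f t‖
          ≤ (2 * C * Mf) * (t ^ r * Real.exp (-t))) := by
    intro Mf hMf f hfc hfb
    obtain ⟨i1, i2, i3⟩ := hGreen Mf hMf f hfc hfb
    refine ⟨i1, i2, fun t ht => ?_⟩
    calc ‖greenOp 𝒜 P₁ P₂ P₃ t₀ f t‖
        ≤ C * Mf * Real.exp (-t) * (1 + (t - t₀) ^ r) := i3 t ht
      _ ≤ C * Mf * Real.exp (-t) * (2 * t ^ r) :=
          mul_le_mul_of_nonneg_left (factB t ht) (by positivity)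
      _ = (2 * C * Mf) * (t ^ r * Real.exp (-t)) := by ring
  -- the nonlinearity
  set F : (ℝ → EuclideanSpace ℝ (Fin N)) → ℝ → EuclideanSpace ℝ (Fin N) :=
    fun u s => Real.exp (-s) • (H s (u s) + h s) with hF_def
  have Fcont : ∀ u : ℝ → EuclideanSpace ℝ (Fin N), ContinuousOn u (Set.Ici t₀) →
      ContinuousOn (F u) (Set.Ici t₀) := by
    intro u hu
    exact ((Real.continuous_exp.comp continuous_neg).continuousOn).smul
      ((hHcont.clm_apply hu).add hhcont)
  have Fbound : ∀ (B : ℝ), 0 ≤ B → ∀ u : ℝ → EuclideanSpace ℝ (Fin N),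
      (∀ t ≥ t₀, ‖u t‖ ≤ B * (t ^ r * Real.exp (-t))) →
      ∀ t ≥ t₀, ‖F u t‖ ≤ (M * B * (t₀ ^ r * Real.exp (-t₀)) + m) * Real.exp (-t) := by
    intro B hB u hu t ht
    have h1 : ‖F u t‖ = Real.exp (-t) * ‖H t (u t) + h t‖ := by
      simp only [hF_def]
      rw [norm_smul, Real.norm_eq_abs, Real.abs_exp]
    have hut : ‖u t‖ ≤ B * (t₀ ^ r * Real.exp (-t₀)) :=
      le_trans (hu t ht) (mul_le_mul_of_nonneg_left (factA t ht) hB)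
    have h2 : ‖H t (u t) + h t‖ ≤ M * B * (t₀ ^ r * Real.exp (-t₀)) + m := by
      calc ‖H t (u t) + h t‖ ≤ ‖H t (u t)‖ + ‖h t‖ := norm_add_le _ _
        _ ≤ ‖H t‖ * ‖u t‖ + m := add_le_add ((H t).le_opNorm _) (hhbdd t ht)
        _ ≤ M * (B * (t₀ ^ r * Real.exp (-t₀))) + m := by
            have := mul_le_mul (hHbdd t ht) hut (norm_nonneg _) hM.le
            linarith
        _ = M * B * (t₀ ^ r * Real.exp (-t₀)) + m := by ring
    rw [h1, mul_comm]
    exact mul_le_mul_of_nonneg_right h2 (Real.exp_pos _).le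
  -- integrability over Ioc
  have intIoc : ∀ (f : ℝ → EuclideanSpace ℝ (Fin N)), ContinuousOn f (Set.Ici t₀) →
      ∀ t, t₀ ≤ t →
      IntegrableOn (fun s => NormedSpace.exp ((t - s) • 𝒜) ((P₂ + P₃) (f s)))
        (Set.Ioc t₀ t) := by
    intro f hf t _
    apply IntegrableOn.mono_set _ Set.Ioc_subset_Icc_self
    apply ContinuousOn.integrableOn_Icc
    have hexp : Continuous fun s : ℝ => NormedSpace.exp ((t - s) • 𝒜) :=
      (continuous_iff_continuousAt.2 fun x => (NormedSpace.exp_analytic (𝕂 := ℝ) x).continuousAt).comp ((continuous_const.sub continuous_id).smul continuous_const)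
    exact hexp.continuousOn.clm_apply
      ((P₂ + P₃).continuous.comp_continuousOn (hf.mono Set.Icc_subset_Ici_self))
  -- linearity of the Green operator in f (for differences)
  have gsub : ∀ (f g : ℝ → EuclideanSpace ℝ (Fin N)),
      ContinuousOn f (Set.Ici t₀) → ContinuousOn g (Set.Ici t₀) →
      ∀ t, t₀ ≤ t →
      IntegrableOn (fun s => NormedSpace.exp ((t - s) • 𝒜) (P₁ (f s))) (Set.Ioi t) →
      IntegrableOn (fun s => NormedSpace.exp ((t - s) • 𝒜) (P₁ (g s))) (Set.Ioi t) →
      greenOp 𝒜 P₁ P₂ P₃ t₀ f t - greenOp 𝒜 P₁ P₂ P₃ t₀ g t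
        = greenOp 𝒜 P₁ P₂ P₃ t₀ (fun s => f s - g s) t := by
    intro f g hfc hgc t ht hif hig
    simp only [greenOp]
    have e1 : (∫ s in Set.Ioc t₀ t, NormedSpace.exp ((t - s) • 𝒜) ((P₂ + P₃) (f s - g s)))
        = (∫ s in Set.Ioc t₀ t, NormedSpace.exp ((t - s) • 𝒜) ((P₂ + P₃) (f s)))
          - ∫ s in Set.Ioc t₀ t, NormedSpace.exp ((t - s) • 𝒜) ((P₂ + P₃) (g s)) := by
      rw [← integral_sub (intIoc f hfc t ht) (intIoc g hgc t ht)]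
      congr 1
      funext s
      simp [map_sub]
    have e2 : (∫ s in Set.Ioi t, NormedSpace.exp ((t - s) • 𝒜) (P₁ (f s - g s)))
        = (∫ s in Set.Ioi t, NormedSpace.exp ((t - s) • 𝒜) (P₁ (f s)))
          - ∫ s in Set.Ioi t, NormedSpace.exp ((t - s) • 𝒜) (P₁ (g s)) := by
      rw [← integral_sub hif hig]
      congr 1
      funext s
      simp [map_sub]
    rw [e1, e2]
    abel
  -- geometric sums
  have hsummable : Summable fun k : ℕ => q ^ k := summable_geometric_of_lt_one hq0.le hq
  have Sle : ∀ n : ℕ, (∑ k ∈ Finset.range n, q ^ k) ≤ 1 / (1 - q) := by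
    intro n
    have h1 : (∑ k ∈ Finset.range n, q ^ k) ≤ ∑' k : ℕ, q ^ k :=
      Summable.sum_le_tsum _ (fun k _ => by positivity) hsummable
    rw [tsum_geometric_of_lt_one hq0.le hq] at h1
    rw [one_div]
    exact h1
  have KS : ∀ n : ℕ, K₀ * (∑ k ∈ Finset.range n, q ^ k) ≤ K := by
    intro n
    have := mul_le_mul_of_nonneg_left (Sle n) hK₀0.le
    calc K₀ * (∑ k ∈ Finset.range n, q ^ k) ≤ K₀ * (1 / (1 - q)) := this
      _ = K := by rw [hK_def]; ring
  set Mbig : ℝ := M * K * (t₀ ^ r * Real.exp (-t₀)) + m with hMbig_def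
  have hMbig : 0 < Mbig := by
    rw [hMbig_def]; positivity
  -- Picard iterates
  let v : ℕ → ℝ → EuclideanSpace ℝ (Fin N) := fun n =>
    Nat.rec (fun _ => 0) (fun _ vn => greenOp 𝒜 P₁ P₂ P₃ t₀ (F vn)) n
  have hv0 : v 0 = fun _ => 0 := rfl
  have hvs : ∀ n, v (n + 1) = greenOp 𝒜 P₁ P₂ P₃ t₀ (F (v n)) := fun n => rfl
  -- main induction
  have main : ∀ n : ℕ, ContinuousOn (v n) (Set.Ici t₀) ∧
      (∀ t ≥ t₀, ‖v n t‖ ≤ K₀ * (∑ k ∈ Finset.range n, q ^ k) * (t ^ r * Real.exp (-t))) ∧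
      (∀ t ≥ t₀, ‖v (n + 1) t - v n t‖ ≤ K₀ * q ^ n * (t ^ r * Real.exp (-t))) := by
    intro n
    induction n with
    | zero =>
      refine ⟨continuousOn_const, fun t ht => by simp [hv0], fun t ht => ?_⟩
      have hF0b : ∀ s ≥ t₀, ‖F (v 0) s‖ ≤ m * Real.exp (-s) := by
        intro s hs
        have := Fbound 0 le_rfl (v 0) (fun u hu => by simp [hv0]) s hs
        simpa using this
      obtain ⟨_, _, hb⟩ := key m hm (F (v 0)) (Fcont _ continuousOn_const) hF0b
      have := hb t ht
      rw [hvs 0]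
      simpa [hv0, hK₀_def] using this
    | succ n ih =>
      obtain ⟨ihc, ihb, ihd⟩ := ih
      have hbnK : ∀ t ≥ t₀, ‖v n t‖ ≤ K * (t ^ r * Real.exp (-t)) := by
        intro t ht
        exact le_trans (ihb t ht)
          (mul_le_mul_of_nonneg_right (KS n) (trexp_nonneg t ht))
      obtain ⟨hIoi_n, hderiv_n, _⟩ :=
        key Mbig hMbig (F (v n)) (Fcont _ ihc) (Fbound K hK0.le (v n) hbnK)
      have hc1 : ContinuousOn (v (n + 1)) (Set.Ici t₀) := by
        rw [hvs n]
        exact fun t ht => (hderiv_n t ht).continuousWithinAt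
      have hb1 : ∀ t ≥ t₀, ‖v (n + 1) t‖
          ≤ K₀ * (∑ k ∈ Finset.range (n + 1), q ^ k) * (t ^ r * Real.exp (-t)) := by
        intro t ht
        have h1 : ‖v (n + 1) t‖ ≤ ‖v (n + 1) t - v n t‖ + ‖v n t‖ := by
          have := norm_add_le (v (n + 1) t - v n t) (v n t)
          simpa using this
        have h2 := ihd t ht
        have h3 := ihb t ht
        have h4 : K₀ * (∑ k ∈ Finset.range (n + 1), q ^ k) * (t ^ r * Real.exp (-t))
            = K₀ * (∑ k ∈ Finset.range n, q ^ k) * (t ^ r * Real.exp (-t))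
              + K₀ * q ^ n * (t ^ r * Real.exp (-t)) := by
          rw [Finset.sum_range_succ]; ring
        linarith
      refine ⟨hc1, hb1, ?_⟩
      -- contraction step
      have hbn1K : ∀ t ≥ t₀, ‖v (n + 1) t‖ ≤ K * (t ^ r * Real.exp (-t)) := by
        intro t ht
        exact le_trans (hb1 t ht)
          (mul_le_mul_of_nonneg_right (KS (n + 1)) (trexp_nonneg t ht))
      obtain ⟨hIoi_n1, _, _⟩ :=
        key Mbig hMbig (F (v (n + 1))) (Fcont _ hc1) (Fbound K hK0.le (v (n + 1)) hbn1K)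
      set d : ℝ → EuclideanSpace ℝ (Fin N) :=
        fun s => Real.exp (-s) • (H s (v (n + 1) s - v n s)) with hd_def
      have hdiffF : (fun s => F (v (n + 1)) s - F (v n) s) = d := by
        funext s
        simp only [hF_def, hd_def]
        rw [← smul_sub]
        congr 1
        rw [map_sub]
        abel
      have hdcont : ContinuousOn d (Set.Ici t₀) :=
        ((Real.continuous_exp.comp continuous_neg).continuousOn).smul
          (hHcont.clm_apply (hc1.sub ihc))
      have hdb : ∀ t ≥ t₀, ‖d t‖
          ≤ (M * (K₀ * q ^ n) * (t₀ ^ r * Real.exp (-t₀))) * Real.exp (-t) := by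
        intro t ht
        have h1 : ‖d t‖ = Real.exp (-t) * ‖H t (v (n + 1) t - v n t)‖ := by
          simp only [hd_def]
          rw [norm_smul, Real.norm_eq_abs, Real.abs_exp]
        have h2 : ‖H t (v (n + 1) t - v n t)‖ ≤ M * ((K₀ * q ^ n) * (t₀ ^ r * Real.exp (-t₀))) := by
          calc ‖H t (v (n + 1) t - v n t)‖ ≤ ‖H t‖ * ‖v (n + 1) t - v n t‖ :=
              (H t).le_opNorm _
            _ ≤ M * ((K₀ * q ^ n) * (t₀ ^ r * Real.exp (-t₀))) := by
              apply mul_le_mul (hHbdd t ht) _ (norm_nonneg _) hM.le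
              calc ‖v (n + 1) t - v n t‖ ≤ K₀ * q ^ n * (t ^ r * Real.exp (-t)) := ihd t ht
                _ ≤ K₀ * q ^ n * (t₀ ^ r * Real.exp (-t₀)) :=
                    mul_le_mul_of_nonneg_left (factA t ht)
                      (mul_nonneg hK₀0.le (pow_nonneg hq0.le n))
                _ = (K₀ * q ^ n) * (t₀ ^ r * Real.exp (-t₀)) := by ring
        rw [h1, mul_comm]
        apply mul_le_mul_of_nonneg_right _ (Real.exp_pos _).le
        calc ‖H t (v (n + 1) t - v n t)‖
            ≤ M * ((K₀ * q ^ n) * (t₀ ^ r * Real.exp (-t₀))) := h2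
          _ = M * (K₀ * q ^ n) * (t₀ ^ r * Real.exp (-t₀)) := by ring
      have hMd : (0:ℝ) < M * (K₀ * q ^ n) * (t₀ ^ r * Real.exp (-t₀)) :=
        mul_pos (mul_pos hM (mul_pos hK₀0 (pow_pos hq0 n))) (by positivity)
      obtain ⟨_, _, hbd⟩ := key _ hMd d hdcont hdb
      intro t ht
      have he := gsub (F (v (n + 1))) (F (v n)) (Fcont _ hc1) (Fcont _ ihc) t ht
        (hIoi_n1 t ht) (hIoi_n t ht)
      rw [hdiffF] at he
      have hMd_eq : 2 * C * (M * (K₀ * q ^ n) * (t₀ ^ r * Real.exp (-t₀)))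
          = K₀ * q ^ (n + 1) := by
        rw [hq_def, pow_succ]
        ring
      calc ‖v (n + 1 + 1) t - v (n + 1) t‖
          = ‖greenOp 𝒜 P₁ P₂ P₃ t₀ d t‖ := by rw [hvs (n + 1), hvs n, he]
        _ ≤ 2 * C * (M * (K₀ * q ^ n) * (t₀ ^ r * Real.exp (-t₀)))
              * (t ^ r * Real.exp (-t)) := hbd t ht
        _ = K₀ * q ^ (n + 1) * (t ^ r * Real.exp (-t)) := by rw [hMd_eq]
  -- Cauchy sequence and limit
  have hdist : ∀ t, t₀ ≤ t → ∀ n : ℕ,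
      dist (v n t) (v (n + 1) t) ≤ (K₀ * (t ^ r * Real.exp (-t))) * q ^ n := by
    intro t ht n
    rw [dist_eq_norm, norm_sub_rev]
    calc ‖v (n + 1) t - v n t‖ ≤ K₀ * q ^ n * (t ^ r * Real.exp (-t)) := (main n).2.2 t ht
      _ = (K₀ * (t ^ r * Real.exp (-t))) * q ^ n := by ring
  have hCt : ∀ t, t₀ ≤ t → CauchySeq (fun n => v n t) := by
    intro t ht
    exact cauchySeq_of_le_geometric q (K₀ * (t ^ r * Real.exp (-t))) hq (hdist t ht)
  set vlim : ℝ → EuclideanSpace ℝ (Fin N) :=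
    fun t => limUnder atTop (fun n => v n t) with hvlim_def
  have hTend : ∀ t, t₀ ≤ t → Tendsto (fun n => v n t) atTop (𝓝 (vlim t)) := by
    intro t ht
    exact (hCt t ht).tendsto_limUnder
  have hTail : ∀ n : ℕ, ∀ t, t₀ ≤ t →
      ‖v n t - vlim t‖ ≤ K₀ * (t ^ r * Real.exp (-t)) * q ^ n / (1 - q) := by
    intro n t ht
    have := dist_le_of_le_geometric_of_tendsto q (K₀ * (t ^ r * Real.exp (-t)))
      hq (hdist t ht) (hTend t ht) n
    rwa [dist_eq_norm] at this
  have hvb : ∀ t ≥ t₀, ‖vlim t‖ ≤ K * (t ^ r * Real.exp (-t)) := by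
    intro t ht
    have h1 := hTail 0 t ht
    rw [hv0] at h1
    simp only [pow_zero, mul_one] at h1
    have h2 : ‖(fun _ => (0 : EuclideanSpace ℝ (Fin N))) t - vlim t‖ = ‖vlim t‖ := by
      simp
    rw [h2] at h1
    calc ‖vlim t‖ ≤ K₀ * (t ^ r * Real.exp (-t)) / (1 - q) := h1
      _ = K * (t ^ r * Real.exp (-t)) := by rw [hK_def]; ring
  -- uniform convergence and continuity of the limit
  have hUnif : TendstoUniformlyOn (fun n t => v n t) vlim atTop (Set.Ici t₀) := by
    rw [Metric.tendstoUniformlyOn_iff]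
    intro ε hε
    have hc0 : Tendsto (fun n : ℕ => (K₀ * (t₀ ^ r * Real.exp (-t₀)) / (1 - q)) * q ^ n)
        atTop (𝓝 0) := by
      have h0 := (tendsto_pow_atTop_nhds_zero_of_lt_one hq0.le hq).const_mul
        (K₀ * (t₀ ^ r * Real.exp (-t₀)) / (1 - q))
      rwa [mul_zero] at h0
    filter_upwards [hc0.eventually_lt_const hε] with n hn
    intro t ht
    rw [dist_comm, dist_eq_norm]
    have h1 := hTail n t ht
    have h2 : K₀ * (t ^ r * Real.exp (-t)) * q ^ n / (1 - q)
        ≤ (K₀ * (t₀ ^ r * Real.exp (-t₀)) / (1 - q)) * q ^ n := by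
      have hstep : K₀ * (t ^ r * Real.exp (-t)) * q ^ n
          ≤ K₀ * (t₀ ^ r * Real.exp (-t₀)) * q ^ n :=
        mul_le_mul_of_nonneg_right
          (mul_le_mul_of_nonneg_left (factA t ht) hK₀0.le) (pow_nonneg hq0.le n)
      calc K₀ * (t ^ r * Real.exp (-t)) * q ^ n / (1 - q)
          ≤ K₀ * (t₀ ^ r * Real.exp (-t₀)) * q ^ n / (1 - q) :=
            div_le_div_of_nonneg_right' hstep h1q
        _ = (K₀ * (t₀ ^ r * Real.exp (-t₀)) / (1 - q)) * q ^ n := by ring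
    exact lt_of_le_of_lt (le_trans h1 h2) hn
  have hvcont : ContinuousOn vlim (Set.Ici t₀) :=
    hUnif.continuousOn (Filter.Eventually.of_forall fun n => (main n).1).frequently
  -- admissibility of F vlim
  obtain ⟨hIoiV, hderivV, _⟩ :=
    key Mbig hMbig (F vlim) (Fcont _ hvcont) (Fbound K hK0.le vlim hvb)
  -- fixed point property
  have hfix : ∀ t, t₀ ≤ t → greenOp 𝒜 P₁ P₂ P₃ t₀ (F vlim) t = vlim t := by
    intro t ht
    have h1 : Tendsto (fun n => v (n + 1) t) atTop (𝓝 (vlim t)) :=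
      (hTend t ht).comp (tendsto_add_atTop_nat 1)
    have h2 : Tendsto (fun n => v (n + 1) t) atTop
        (𝓝 (greenOp 𝒜 P₁ P₂ P₃ t₀ (F vlim) t)) := by
      rw [tendsto_iff_norm_sub_tendsto_zero]
      have hb : ∀ n : ℕ, ‖v (n + 1) t - greenOp 𝒜 P₁ P₂ P₃ t₀ (F vlim) t‖
          ≤ (2 * C * (M * (K₀ / (1 - q)) * (t₀ ^ r * Real.exp (-t₀)))
              * (t ^ r * Real.exp (-t))) * q ^ n := by
        intro n
        have hvnK : ∀ s ≥ t₀, ‖v n s‖ ≤ K * (s ^ r * Real.exp (-s)) := fun s hs =>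
          le_trans ((main n).2.1 s hs)
            (mul_le_mul_of_nonneg_right (KS n) (trexp_nonneg s hs))
        obtain ⟨hIoi_n, _, _⟩ :=
          key Mbig hMbig (F (v n)) (Fcont _ (main n).1) (Fbound K hK0.le (v n) hvnK)
        set dn : ℝ → EuclideanSpace ℝ (Fin N) :=
          fun s => Real.exp (-s) • (H s (v n s - vlim s)) with hdn_def
        have hdiffF : (fun s => F (v n) s - F vlim s) = dn := by
          funext s
          simp only [hF_def, hdn_def]
          rw [← smul_sub]
          congr 1
          rw [map_sub]
          abel
        have hdncont : ContinuousOn dn (Set.Ici t₀) :=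
          ((Real.continuous_exp.comp continuous_neg).continuousOn).smul
            (hHcont.clm_apply ((main n).1.sub hvcont))
        have hMdn : (0:ℝ) < M * (K₀ * q ^ n / (1 - q)) * (t₀ ^ r * Real.exp (-t₀)) :=
          mul_pos (mul_pos hM (div_pos (mul_pos hK₀0 (pow_pos hq0 n)) h1q)) (by positivity)
        have hdnb : ∀ s ≥ t₀, ‖dn s‖
            ≤ (M * (K₀ * q ^ n / (1 - q)) * (t₀ ^ r * Real.exp (-t₀))) * Real.exp (-s) := by
          intro s hs
          have h1' : ‖dn s‖ = Real.exp (-s) * ‖H s (v n s - vlim s)‖ := by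
            simp only [hdn_def]
            rw [norm_smul, Real.norm_eq_abs, Real.abs_exp]
          have h2' : ‖v n s - vlim s‖ ≤ K₀ * q ^ n / (1 - q) * (t₀ ^ r * Real.exp (-t₀)) := by
            have ha := hTail n s hs
            have hstep : K₀ * (s ^ r * Real.exp (-s)) * q ^ n
                ≤ K₀ * (t₀ ^ r * Real.exp (-t₀)) * q ^ n :=
              mul_le_mul_of_nonneg_right
                (mul_le_mul_of_nonneg_left (factA s hs) hK₀0.le) (pow_nonneg hq0.le n)
            calc ‖v n s - vlim s‖
                ≤ K₀ * (s ^ r * Real.exp (-s)) * q ^ n / (1 - q) := ha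
              _ ≤ K₀ * (t₀ ^ r * Real.exp (-t₀)) * q ^ n / (1 - q) :=
                  div_le_div_of_nonneg_right' hstep h1q
              _ = K₀ * q ^ n / (1 - q) * (t₀ ^ r * Real.exp (-t₀)) := by ring
          rw [h1']
          calc Real.exp (-s) * ‖H s (v n s - vlim s)‖
              ≤ Real.exp (-s) * (M * (K₀ * q ^ n / (1 - q) * (t₀ ^ r * Real.exp (-t₀)))) :=
                mul_le_mul_of_nonneg_left
                  (le_trans ((H s).le_opNorm _)
                    (mul_le_mul (hHbdd s hs) h2' (norm_nonneg _) hM.le))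
                  (Real.exp_pos _).le
            _ = M * (K₀ * q ^ n / (1 - q)) * (t₀ ^ r * Real.exp (-t₀)) * Real.exp (-s) := by
                ring
        obtain ⟨_, _, hbd⟩ := key _ hMdn dn hdncont hdnb
        have he := gsub (F (v n)) (F vlim) (Fcont _ (main n).1) (Fcont _ hvcont) t ht
          (hIoi_n t ht) (hIoiV t ht)
        rw [hdiffF] at he
        calc ‖v (n + 1) t - greenOp 𝒜 P₁ P₂ P₃ t₀ (F vlim) t‖
            = ‖greenOp 𝒜 P₁ P₂ P₃ t₀ dn t‖ := by rw [hvs n, he]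
          _ ≤ 2 * C * (M * (K₀ * q ^ n / (1 - q)) * (t₀ ^ r * Real.exp (-t₀)))
                * (t ^ r * Real.exp (-t)) := hbd t ht
          _ = (2 * C * (M * (K₀ / (1 - q)) * (t₀ ^ r * Real.exp (-t₀)))
                * (t ^ r * Real.exp (-t))) * q ^ n := by ring
      have hz : Tendsto (fun n : ℕ => (2 * C * (M * (K₀ / (1 - q)) * (t₀ ^ r * Real.exp (-t₀)))
          * (t ^ r * Real.exp (-t))) * q ^ n) atTop (𝓝 0) := by
        have h0 := (tendsto_pow_atTop_nhds_zero_of_lt_one hq0.le hq).const_mul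
          (2 * C * (M * (K₀ / (1 - q)) * (t₀ ^ r * Real.exp (-t₀))) * (t ^ r * Real.exp (-t)))
        rwa [mul_zero] at h0
      exact squeeze_zero (fun n => norm_nonneg _) hb hz
    exact tendsto_nhds_unique h2 h1
  -- conclusion
  refine ⟨vlim, ?_, ?_⟩
  · intro t ht
    have hd := hderivV t ht
    have h3 : 𝒜 (greenOp 𝒜 P₁ P₂ P₃ t₀ (F vlim) t) + F vlim t
        = 𝒜 (vlim t) + Real.exp (-t) • (H t (vlim t) + h t) := by
      rw [hfix t ht, hF_def]
    rw [← h3]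
    exact hd.congr (fun y hy => (hfix y hy).symm) (hfix t ht).symm
  · intro t ht
    have := hvb t ht
    calc ‖vlim t‖ ≤ K * (t ^ r * Real.exp (-t)) := this
      _ = K * t ^ r * Real.exp (-t) := by ring
end

section
/- Let y : [0,∞) → ℝⁿ be continuously differentiable on [0,∞) and satisfy y′(x) = (A/x + B(x))y(x) + g(x) for all x > 0. Then A·y(0) = 0 and (E − A)·y′(0) = B(0)y(0) + g(0); consequently, if no root of the characteristic polynomial of A has real part 1, then y(x) = y(0) + (E−A)⁻¹(B(0)y(0)+g(0))·x + o(x) as x → 0⁺. -/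
open MeasureTheory Set Filter
open scoped Topology

/-- every `C¹([0,∞))`-solution of `y' = (A/x + B(x)) y + g(x)` satisfies
`A y(0) = 0` and `(E - A) y'(0) = B(0) y(0) + g(0)`; if moreover no complex root of the
characteristic polynomial of `A` has real part `1`, then
`y(x) = y(0) + (E-A)⁻¹(B(0)y(0)+g(0)) x + o(x)` as `x → 0⁺`. -/
theorem C1_solution_initial_structure (n : ℕ)
    (A : EuclideanSpace ℝ (Fin n) →L[ℝ] EuclideanSpace ℝ (Fin n))
    (B : ℝ → EuclideanSpace ℝ (Fin n) →L[ℝ] EuclideanSpace ℝ (Fin n))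
    (g : ℝ → EuclideanSpace ℝ (Fin n))
    (hBcont : ContinuousOn B (Set.Ici 0)) (hBbdd : ∃ M, ∀ x ≥ (0 : ℝ), ‖B x‖ ≤ M)
    (hgcont : ContinuousOn g (Set.Ici 0)) (hgbdd : ∃ M, ∀ x ≥ (0 : ℝ), ‖g x‖ ≤ M)
    (y y' : ℝ → EuclideanSpace ℝ (Fin n))
    -- y is continuously differentiable on [0,∞) with derivative y'
    (hyd : ∀ x ∈ Set.Ici (0 : ℝ), HasDerivWithinAt y (y' x) (Set.Ici 0) x)
    (hy'c : ContinuousOn y' (Set.Ici 0))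
    -- y solves the singular system for x > 0
    (hODE : ∀ x > (0 : ℝ), y' x = x⁻¹ • A (y x) + B x (y x) + g x) :
    A (y 0) = 0 ∧
    (1 - A) (y' 0) = B 0 (y 0) + g 0 ∧
    ((∀ z : ℂ,
        (Polynomial.map (algebraMap ℝ ℂ)
          (A : EuclideanSpace ℝ (Fin n) →ₗ[ℝ] EuclideanSpace ℝ (Fin n)).charpoly).IsRoot z →
        z.re ≠ 1) →
      (fun x => y x - y 0 - x • Ring.inverse (1 - A) (B 0 (y 0) + g 0))
        =o[𝓝[>] (0 : ℝ)] fun x => x) := by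
  have h0 : (0 : ℝ) ∈ Set.Ici (0 : ℝ) := Set.self_mem_Ici
  have hl : 𝓝[>] (0 : ℝ) ≤ 𝓝[Set.Ici (0 : ℝ)] 0 := nhdsWithin_mono _ Ioi_subset_Ici_self
  have hycont : ContinuousOn y (Set.Ici 0) := fun x hx => (hyd x hx).continuousWithinAt
  have hyl : Tendsto y (𝓝[>] (0 : ℝ)) (𝓝 (y 0)) := (hycont 0 h0).mono_left hl
  have hy'l : Tendsto y' (𝓝[>] (0 : ℝ)) (𝓝 (y' 0)) := (hy'c 0 h0).mono_left hl
  have hBl : Tendsto (fun x => B x (y x)) (𝓝[>] (0 : ℝ)) (𝓝 (B 0 (y 0))) :=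
    ((hBcont.clm_apply hycont) 0 h0).mono_left hl
  have hgl : Tendsto g (𝓝[>] (0 : ℝ)) (𝓝 (g 0)) := (hgcont 0 h0).mono_left hl
  have hhl : Tendsto (fun x => y' x - B x (y x) - g x) (𝓝[>] (0 : ℝ))
      (𝓝 (y' 0 - B 0 (y 0) - g 0)) := (hy'l.sub hBl).sub hgl
  have hxl : Tendsto (fun x : ℝ => x) (𝓝[>] (0 : ℝ)) (𝓝 0) :=
    tendsto_id.mono_left nhdsWithin_le_nhds
  -- key algebraic identity for x > 0
  have key : ∀ x ∈ Set.Ioi (0 : ℝ), A (y x) = x • (y' x - B x (y x) - g x) := by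
    intro x hx
    have hODEx := hODE x hx
    have hx0 : x ≠ 0 := ne_of_gt hx
    have : y' x - B x (y x) - g x = x⁻¹ • A (y x) := by
      rw [hODEx]; abel
    rw [this, smul_inv_smul₀ hx0]
  -- Part 1 : A (y 0) = 0
  have hA0 : A (y 0) = 0 := by
    have t1 : Tendsto (fun x => A (y x)) (𝓝[>] (0 : ℝ)) (𝓝 (A (y 0))) :=
      (A.continuous.tendsto _).comp hyl
    have t2 : Tendsto (fun x => A (y x)) (𝓝[>] (0 : ℝ))
        (𝓝 ((0 : ℝ) • (y' 0 - B 0 (y 0) - g 0))) := by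
      refine (hxl.smul hhl).congr' ?_
      filter_upwards [self_mem_nhdsWithin] with x hx
      exact (key x hx).symm
    have := tendsto_nhds_unique t1 t2
    simpa using this
  -- slope limit
  have hslope : Tendsto (slope y 0) (𝓝[>] (0 : ℝ)) (𝓝 (y' 0)) := by
    have := hasDerivWithinAt_iff_tendsto_slope.mp (hyd 0 h0)
    simpa [Set.Ici_sdiff_left] using this
  -- Part 2 : (1 - A) (y' 0) = B 0 (y 0) + g 0
  have hAy' : A (y' 0) = y' 0 - B 0 (y 0) - g 0 := by
    have t1 : Tendsto (fun x => A (slope y 0 x)) (𝓝[>] (0 : ℝ)) (𝓝 (A (y' 0))) :=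
      (A.continuous.tendsto _).comp hslope
    have t2 : Tendsto (fun x => A (slope y 0 x)) (𝓝[>] (0 : ℝ))
        (𝓝 (y' 0 - B 0 (y 0) - g 0)) := by
      refine hhl.congr' ?_
      filter_upwards [self_mem_nhdsWithin] with x hx
      have hx0 : (x : ℝ) ≠ 0 := ne_of_gt hx
      have : A (slope y 0 x) = x⁻¹ • A (y x) := by
        simp [slope_def_field, slope, vsub_eq_sub, A.map_smul, A.map_sub, hA0]
      rw [this, key x hx, smul_smul, inv_mul_cancel₀ hx0, one_smul]
    exact tendsto_nhds_unique t1 t2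
  have h2 : (1 - A) (y' 0) = B 0 (y 0) + g 0 := by
    simp only [ContinuousLinearMap.sub_apply, ContinuousLinearMap.one_apply, hAy']
    abel
  refine ⟨hA0, h2, ?_⟩
  intro hroot
  -- (1 - A) is invertible
  have hinj : Function.Injective ⇑(1 - A) := by
    rw [injective_iff_map_eq_zero]
    intro v hv
    by_contra hvne
    have hEv : A v = v := by
      have : v - A v = 0 := by
        simpa [ContinuousLinearMap.sub_apply] using hv
      have := sub_eq_zero.mp this
      exact this.symm
    have heig : Module.End.HasEigenvalue
        (A : EuclideanSpace ℝ (Fin n) →ₗ[ℝ] EuclideanSpace ℝ (Fin n)) 1 :=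
      Module.End.hasEigenvalue_of_hasEigenvector
        ⟨Module.End.mem_eigenspace_iff.mpr (by simpa using hEv), hvne⟩
    have hmin : (minpoly ℝ (A : EuclideanSpace ℝ (Fin n) →ₗ[ℝ] EuclideanSpace ℝ (Fin n))).IsRoot 1 :=
      Module.End.hasEigenvalue_iff_isRoot.mp heig
    have hchar : ((A : EuclideanSpace ℝ (Fin n) →ₗ[ℝ] EuclideanSpace ℝ (Fin n)).charpoly).IsRoot 1 :=
      hmin.dvd (LinearMap.minpoly_dvd_charpoly _)
    have := hroot 1 (by simpa using hchar.map (f := algebraMap ℝ ℂ))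
    exact this rfl
  have hbij : Function.Bijective ⇑(1 - A) := by
    refine ⟨hinj, ?_⟩
    have := (LinearMap.injective_iff_surjective
      (f := ((1 - A : EuclideanSpace ℝ (Fin n) →L[ℝ] EuclideanSpace ℝ (Fin n)) :
        EuclideanSpace ℝ (Fin n) →ₗ[ℝ] EuclideanSpace ℝ (Fin n)))).mp hinj
    exact this
  have hu : IsUnit (1 - A) := ContinuousLinearMap.isUnit_iff_bijective.mpr hbij
  have hval : Ring.inverse (1 - A) (B 0 (y 0) + g 0) = y' 0 := by
    rw [← h2]
    have : Ring.inverse (1 - A) ((1 - A) (y' 0)) = (Ring.inverse (1 - A) * (1 - A)) (y' 0) := rfl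
    rw [this, Ring.inverse_mul_cancel _ hu, ContinuousLinearMap.one_apply]
  -- the little-o statement
  have ho := hasDerivWithinAt_iff_isLittleO.mp (hyd 0 h0)
  have ho' := ho.mono hl
  refine (ho'.congr' ?_ ?_)
  · filter_upwards [self_mem_nhdsWithin] with x _
    rw [hval, sub_zero]
  · filter_upwards [self_mem_nhdsWithin] with x _
    rw [sub_zero]
end

section
/- Let g : (0,x₀] → ℝⁿ be continuous with m := sup ‖g‖ < ∞. Then: (i) for every x ∈ (0,x₀] the integrals below converge absolutely and ‖∫₀ˣ Y(x;x₀)Q₋Y(s;x₀)⁻¹ g(s) ds‖ ≤ m·C₀·x/α and ‖∫ₓ^{x₀} Y(x;x₀)Q₊Y(s;x₀)⁻¹ g(s) ds‖ ≤ m·C₀·x/α; (ii) for every v ∈ ℝⁿ the function ȳ_v(x) := Y(x;x₀)v + ∫₀ˣ Y(x;x₀)Q₋Y(s;x₀)⁻¹ g(s) ds + ∫_{x₀}^{x} Y(x;x₀)Q₊Y(s;x₀)⁻¹ g(s) ds solves y′ = (A/x + B(x))y + g(x) on (0,x₀]; (iii) if Q₊v = v, then ȳ_v(x) → 0 as x →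 0⁺. -/
open MeasureTheory Set Filter
open scoped Topology

lemma ftc_aux8 {E : Type*} [NormedAddCommGroup E] [NormedSpace ℝ E] [CompleteSpace E]
    {f : ℝ → E} {x₀ x : ℝ} (hx₀ : 0 < x₀) (hx : x ∈ Ioc 0 x₀)
    (hcont : ContinuousOn f (Ioc 0 x₀))
    (hmeas : AEStronglyMeasurable f (volume.restrict (Ioc 0 x₀)))
    (hint : IntervalIntegrable f volume x₀ x) :
    HasDerivWithinAt (fun u => ∫ s in x₀..u, f s) (f x) (Ioc 0 x₀) x := by
  rcases eq_or_lt_of_le hx.2 with heq | hlt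
  · subst heq
    have hIocmem : Ioc 0 x ∈ 𝓝[Iic x] x :=
      mem_nhdsWithin.2 ⟨Ioi 0, isOpen_Ioi, hx.1, by rw [Ioi_inter_Iic]⟩
    have hfilter : 𝓝[Iic x] x = 𝓝[Ioc 0 x] x := by
      rw [nhdsWithin_restrict' (Iic x) (Ioi_mem_nhds hx.1), Iic_inter_Ioi]
    have hcw : ContinuousWithinAt f (Iic x) x := by
      unfold ContinuousWithinAt
      rw [hfilter]
      exact hcont x hx
    have := intervalIntegral.integral_hasDerivWithinAt_right (s := Iic x) (t := Iic x) hint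
      ⟨Ioc 0 x, hIocmem, hmeas⟩ hcw
    exact this.mono (fun t ht => ht.2)
  · have hmem : Ioc 0 x₀ ∈ 𝓝 x :=
      mem_of_superset ((isOpen_Ioo).mem_nhds ⟨hx.1, hlt⟩) Ioo_subset_Ioc_self
    have hcontx : ContinuousAt f x := (hcont x ⟨hx.1, hx.2⟩).continuousAt hmem
    exact (intervalIntegral.integral_hasDerivAt_right hint ⟨Ioc 0 x₀, hmem, hmeas⟩
      hcontx).hasDerivWithinAt

/-- on `(0, x₀]`, the family
`ȳ_v(x) = Y(x;x₀) v + ∫₀ˣ Y(x;x₀) Q₋ Y(s;x₀)⁻¹ g(s) ds + ∫_{x₀}^x Y(x;x₀) Q₊ Y(s;x₀)⁻¹ g(s) ds`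
is well defined, its integrals obey the bound `m C₀ x / α`, it solves
`y' = (A/x + B(x)) y + g(x)`, and tends to `0` as `x → 0⁺` whenever `Q₊ v = v`. -/
theorem solutions_near_singular_point (n : ℕ)
    (A : EuclideanSpace ℝ (Fin n) →L[ℝ] EuclideanSpace ℝ (Fin n))
    (B : ℝ → EuclideanSpace ℝ (Fin n) →L[ℝ] EuclideanSpace ℝ (Fin n))
    (hBcont : ContinuousOn B (Set.Ioi 0)) (hBbdd : ∃ M, ∀ x > (0 : ℝ), ‖B x‖ ≤ M)
    (x₀ : ℝ) (hx₀ : 0 < x₀)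
    -- the evolution operator Y(·;x₀)
    (Y : ℝ → EuclideanSpace ℝ (Fin n) →L[ℝ] EuclideanSpace ℝ (Fin n))
    (hYd : ∀ x > (0 : ℝ), HasDerivAt Y ((x⁻¹ • A + B x) ∘L Y x) x)
    (hYx₀ : Y x₀ = 1) (hYu : ∀ x > (0 : ℝ), IsUnit (Y x))
    -- the projectors Q₊, Q₋
    (Qp Qm : EuclideanSpace ℝ (Fin n) →L[ℝ] EuclideanSpace ℝ (Fin n))
    (hQp : Qp ∘L Qp = Qp) (hQm : Qm ∘L Qm = Qm) (hQsum : Qp + Qm = 1)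
    (hQpm : Qp ∘L Qm = 0) (hQmp : Qm ∘L Qp = 0)
    -- the dichotomy-type estimates near the singular point
    (C₀ α : ℝ) (hC₀ : 0 < C₀) (hα : 0 < α)
    (hestp : ∀ x s : ℝ, 0 < x → x ≤ s → s ≤ x₀ →
      ‖Y x ∘L Qp ∘L Ring.inverse (Y s)‖ ≤ C₀ * (x / s) ^ (1 + α))
    (hestm : ∀ x s : ℝ, 0 < s → s ≤ x → x ≤ x₀ →
      ‖Y x ∘L Qm ∘L Ring.inverse (Y s)‖ ≤ C₀ * (x / s) ^ (1 - α))
    -- the inhomogeneity g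
    (g : ℝ → EuclideanSpace ℝ (Fin n)) (m : ℝ)
    (hgcont : ContinuousOn g (Set.Ioc 0 x₀))
    (hgbdd : ∀ x ∈ Set.Ioc (0 : ℝ) x₀, ‖g x‖ ≤ m) :
    -- (i) convergence and bounds of the two integrals
    (∀ x ∈ Set.Ioc (0 : ℝ) x₀,
      IntegrableOn (fun s => (Y x ∘L Qm ∘L Ring.inverse (Y s)) (g s)) (Set.Ioc 0 x) ∧
      ‖∫ s in Set.Ioc (0 : ℝ) x, (Y x ∘L Qm ∘L Ring.inverse (Y s)) (g s)‖
        ≤ m * C₀ * x / α ∧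
      IntegrableOn (fun s => (Y x ∘L Qp ∘L Ring.inverse (Y s)) (g s)) (Set.Ioc x x₀) ∧
      ‖∫ s in Set.Ioc x x₀, (Y x ∘L Qp ∘L Ring.inverse (Y s)) (g s)‖
        ≤ m * C₀ * x / α) ∧
    -- (ii) ȳ_v solves the non-homogeneous system on (0, x₀]
    (∀ v : EuclideanSpace ℝ (Fin n), ∀ x ∈ Set.Ioc (0 : ℝ) x₀,
      HasDerivWithinAt
        (fun u => Y u v + (∫ s in Set.Ioc (0 : ℝ) u, (Y u ∘L Qm ∘L Ring.inverse (Y s)) (g s))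
          + ∫ s in x₀..u, (Y u ∘L Qp ∘L Ring.inverse (Y s)) (g s))
        (x⁻¹ • A (Y x v + (∫ s in Set.Ioc (0 : ℝ) x, (Y x ∘L Qm ∘L Ring.inverse (Y s)) (g s))
            + ∫ s in x₀..x, (Y x ∘L Qp ∘L Ring.inverse (Y s)) (g s))
          + B x (Y x v + (∫ s in Set.Ioc (0 : ℝ) x, (Y x ∘L Qm ∘L Ring.inverse (Y s)) (g s))
            + ∫ s in x₀..x, (Y x ∘L Qp ∘L Ring.inverse (Y s)) (g s))
          + g x)
        (Set.Ioc 0 x₀) x) ∧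
    -- (iii) if Q₊ v = v then ȳ_v(x) → 0 as x → 0⁺
    (∀ v : EuclideanSpace ℝ (Fin n), Qp v = v →
      Tendsto
        (fun u => Y u v + (∫ s in Set.Ioc (0 : ℝ) u, (Y u ∘L Qm ∘L Ring.inverse (Y s)) (g s))
          + ∫ s in x₀..u, (Y u ∘L Qp ∘L Ring.inverse (Y s)) (g s))
        (𝓝[>] 0) (𝓝 0)) := by
  have hm0 : 0 ≤ m := le_trans (norm_nonneg _) (hgbdd x₀ ⟨hx₀, le_rfl⟩)
  -- continuity of Y, Ring.inverse ∘ Y, and q s = (Y s)⁻¹ (g s)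
  have hYcont : ContinuousOn Y (Ioi 0) := fun s hs => (hYd s hs).continuousAt.continuousWithinAt
  have hZcont : ContinuousOn (fun s => Ring.inverse (Y s)) (Ioi 0) := by
    intro s hs
    have h1 := NormedRing.inverse_continuousAt (hYu s hs).unit
    rw [IsUnit.unit_spec] at h1
    exact h1.comp_continuousWithinAt (hYcont s hs)
  have hqcont : ContinuousOn (fun s => Ring.inverse (Y s) (g s)) (Ioc 0 x₀) :=
    ContinuousOn.clm_apply (hZcont.mono Ioc_subset_Ioi_self) hgcont
  -- Y x ∘ (Y x)⁻¹ = id pointwise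
  have hYZ : ∀ t : ℝ, 0 < t → ∀ w, Y t (Ring.inverse (Y t) w) = w := by
    intro t ht w
    have h1 : Y t * Ring.inverse (Y t) = 1 := Ring.mul_inverse_cancel _ (hYu t ht)
    calc Y t (Ring.inverse (Y t) w) = (Y t * Ring.inverse (Y t)) w :=
          (ContinuousLinearMap.mul_apply _ _ _).symm
      _ = w := by rw [h1]; rfl
  -- part (i), minus part
  have key_m : ∀ x ∈ Ioc (0:ℝ) x₀,
      IntegrableOn (fun s => (Y x ∘L Qm ∘L Ring.inverse (Y s)) (g s)) (Ioc 0 x) ∧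
      ‖∫ s in Ioc (0:ℝ) x, (Y x ∘L Qm ∘L Ring.inverse (Y s)) (g s)‖ ≤ m * C₀ * x / α := by
    intro x hx
    obtain ⟨hx0, hxx₀⟩ := hx
    have hfc : ContinuousOn (fun s => (Y x ∘L Qm ∘L Ring.inverse (Y s)) (g s)) (Ioc 0 x) := by
      have h1 : ContinuousOn (fun s => (Y x ∘L Qm) (Ring.inverse (Y s) (g s))) (Ioc 0 x) :=
        (Y x ∘L Qm).continuous.comp_continuousOn
          (hqcont.mono (Ioc_subset_Ioc_right hxx₀))
      simpa [ContinuousLinearMap.comp_apply] using h1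
    have hmeas : AEStronglyMeasurable (fun s => (Y x ∘L Qm ∘L Ring.inverse (Y s)) (g s))
        (volume.restrict (Ioc 0 x)) := hfc.aestronglyMeasurable measurableSet_Ioc
    have hφint : IntegrableOn (fun s : ℝ => (m * C₀ * x ^ (1 - α)) * s ^ (α - 1)) (Ioc 0 x) := by
      have h1 := intervalIntegral.intervalIntegrable_rpow'
        (show (-1:ℝ) < α - 1 by linarith) (a := 0) (b := x)
      rw [intervalIntegrable_iff_integrableOn_Ioc_of_le hx0.le] at h1
      exact h1.const_mul _
    have hbound : ∀ s ∈ Ioc (0:ℝ) x, ‖(Y x ∘L Qm ∘L Ring.inverse (Y s)) (g s)‖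
        ≤ (m * C₀ * x ^ (1 - α)) * s ^ (α - 1) := by
      intro s hs
      have h1 : ‖(Y x ∘L Qm ∘L Ring.inverse (Y s)) (g s)‖
          ≤ ‖Y x ∘L Qm ∘L Ring.inverse (Y s)‖ * ‖g s‖ := ContinuousLinearMap.le_opNorm _ _
      have h2 := hestm x s hs.1 hs.2 hxx₀
      have h3 : ‖g s‖ ≤ m := hgbdd s ⟨hs.1, hs.2.trans hxx₀⟩
      have h4 : (x / s) ^ (1 - α) = x ^ (1-α) * s ^ (α - 1) := by
        rw [Real.div_rpow hx0.le hs.1.le, div_eq_mul_inv, ← Real.rpow_neg hs.1.le, neg_sub]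
      calc ‖(Y x ∘L Qm ∘L Ring.inverse (Y s)) (g s)‖
          ≤ (C₀ * (x/s)^(1-α)) * m :=
            le_trans h1 (mul_le_mul h2 h3 (norm_nonneg _)
              (mul_nonneg hC₀.le (Real.rpow_nonneg (div_nonneg hx0.le hs.1.le) _)))
        _ = (m * C₀ * x ^ (1 - α)) * s ^ (α - 1) := by rw [h4]; ring
    have hboundae : ∀ᵐ s ∂(volume.restrict (Ioc (0:ℝ) x)),
        ‖(Y x ∘L Qm ∘L Ring.inverse (Y s)) (g s)‖ ≤ (m * C₀ * x ^ (1 - α)) * s ^ (α - 1) :=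
      (ae_restrict_iff' measurableSet_Ioc).2 (Eventually.of_forall hbound)
    have hint : IntegrableOn (fun s => (Y x ∘L Qm ∘L Ring.inverse (Y s)) (g s)) (Ioc 0 x) :=
      Integrable.mono' hφint hmeas hboundae
    refine ⟨hint, ?_⟩
    have h5 : ‖∫ s in Ioc (0:ℝ) x, (Y x ∘L Qm ∘L Ring.inverse (Y s)) (g s)‖
        ≤ ∫ s in Ioc (0:ℝ) x, (m * C₀ * x ^ (1 - α)) * s ^ (α - 1) :=
      norm_integral_le_of_norm_le hφint hboundae
    have h8 : ∫ s in Ioc (0:ℝ) x, s ^ (α-1) = x ^ α / α := by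
      rw [← intervalIntegral.integral_of_le hx0.le,
        integral_rpow (Or.inl (by linarith : (-1:ℝ) < α - 1))]
      rw [Real.zero_rpow (by linarith : α - 1 + 1 ≠ 0)]
      have hα1 : α - 1 + 1 = α := by ring
      rw [hα1, sub_zero]
    have h6 : ∫ s in Ioc (0:ℝ) x, (m * C₀ * x ^ (1 - α)) * s ^ (α - 1) = m * C₀ * x / α := by
      rw [MeasureTheory.integral_const_mul, h8]
      have hxx : x ^ (1-α) * x ^ α = x := by
        rw [← Real.rpow_add hx0]; norm_num
      calc (m * C₀ * x^(1-α)) * (x^α/α) = (m*C₀) * (x^(1-α) * x^α) / α := by ring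
        _ = m * C₀ * x / α := by rw [hxx]
    rw [h6] at h5
    exact h5
  -- part (i), plus part
  have key_p : ∀ x ∈ Ioc (0:ℝ) x₀,
      IntegrableOn (fun s => (Y x ∘L Qp ∘L Ring.inverse (Y s)) (g s)) (Ioc x x₀) ∧
      ‖∫ s in Ioc x x₀, (Y x ∘L Qp ∘L Ring.inverse (Y s)) (g s)‖ ≤ m * C₀ * x / α := by
    intro x hx
    obtain ⟨hx0, hxx₀⟩ := hx
    have hsub : Ioc x x₀ ⊆ Ioc 0 x₀ := Ioc_subset_Ioc_left hx0.le
    have hfc : ContinuousOn (fun s => (Y x ∘L Qp ∘L Ring.inverse (Y s)) (g s)) (Ioc x x₀) := by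
      have h1 : ContinuousOn (fun s => (Y x ∘L Qp) (Ring.inverse (Y s) (g s))) (Ioc x x₀) :=
        (Y x ∘L Qp).continuous.comp_continuousOn (hqcont.mono hsub)
      simpa [ContinuousLinearMap.comp_apply] using h1
    have hmeas : AEStronglyMeasurable (fun s => (Y x ∘L Qp ∘L Ring.inverse (Y s)) (g s))
        (volume.restrict (Ioc x x₀)) := hfc.aestronglyMeasurable measurableSet_Ioc
    have h0notin : (0:ℝ) ∉ uIcc x x₀ := by
      rw [uIcc_of_le hxx₀]
      exact fun h => absurd h.1 (not_le.2 hx0)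
    have hφint : IntegrableOn (fun s : ℝ => (m * C₀ * x ^ (1 + α)) * s ^ (-(1 + α))) (Ioc x x₀) := by
      have h1 := intervalIntegral.intervalIntegrable_rpow (μ := volume) (r := -(1+α)) (a := x) (b := x₀)
        (Or.inr h0notin)
      rw [intervalIntegrable_iff_integrableOn_Ioc_of_le hxx₀] at h1
      exact h1.const_mul _
    have hbound : ∀ s ∈ Ioc x x₀, ‖(Y x ∘L Qp ∘L Ring.inverse (Y s)) (g s)‖
        ≤ (m * C₀ * x ^ (1 + α)) * s ^ (-(1 + α)) := by
      intro s hs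
      have hs0 : (0:ℝ) < s := lt_trans hx0 hs.1
      have h1 : ‖(Y x ∘L Qp ∘L Ring.inverse (Y s)) (g s)‖
          ≤ ‖Y x ∘L Qp ∘L Ring.inverse (Y s)‖ * ‖g s‖ := ContinuousLinearMap.le_opNorm _ _
      have h2 := hestp x s hx0 hs.1.le hs.2
      have h3 : ‖g s‖ ≤ m := hgbdd s (hsub hs)
      have h4 : (x / s) ^ (1 + α) = x ^ (1+α) * s ^ (-(1 + α)) := by
        rw [Real.div_rpow hx0.le hs0.le, div_eq_mul_inv, ← Real.rpow_neg hs0.le]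
      calc ‖(Y x ∘L Qp ∘L Ring.inverse (Y s)) (g s)‖
          ≤ (C₀ * (x/s)^(1+α)) * m :=
            le_trans h1 (mul_le_mul h2 h3 (norm_nonneg _)
              (mul_nonneg hC₀.le (Real.rpow_nonneg (div_nonneg hx0.le hs0.le) _)))
        _ = (m * C₀ * x ^ (1 + α)) * s ^ (-(1 + α)) := by rw [h4]; ring
    have hboundae : ∀ᵐ s ∂(volume.restrict (Ioc x x₀)),
        ‖(Y x ∘L Qp ∘L Ring.inverse (Y s)) (g s)‖ ≤ (m * C₀ * x ^ (1 + α)) * s ^ (-(1 + α)) :=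
      (ae_restrict_iff' measurableSet_Ioc).2 (Eventually.of_forall hbound)
    have hint : IntegrableOn (fun s => (Y x ∘L Qp ∘L Ring.inverse (Y s)) (g s)) (Ioc x x₀) :=
      Integrable.mono' hφint hmeas hboundae
    refine ⟨hint, ?_⟩
    have h5 : ‖∫ s in Ioc x x₀, (Y x ∘L Qp ∘L Ring.inverse (Y s)) (g s)‖
        ≤ ∫ s in Ioc x x₀, (m * C₀ * x ^ (1 + α)) * s ^ (-(1 + α)) :=
      norm_integral_le_of_norm_le hφint hboundae
    have h8 : ∫ s in Ioc x x₀, s ^ (-(1+α)) = (x₀ ^ (-α) - x ^ (-α)) / (-α) := by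
      rw [← intervalIntegral.integral_of_le hxx₀,
        integral_rpow (Or.inr ⟨by intro hc; nlinarith [hα], h0notin⟩)]
      have hα1 : -(1+α) + 1 = -α := by ring
      rw [hα1]
    have h6 : ∫ s in Ioc x x₀, (m * C₀ * x ^ (1 + α)) * s ^ (-(1 + α))
        = (m * C₀ * x ^ (1 + α)) * ((x₀ ^ (-α) - x ^ (-α)) / (-α)) := by
      rw [MeasureTheory.integral_const_mul, h8]
    have h7 : (m * C₀ * x ^ (1 + α)) * ((x₀ ^ (-α) - x ^ (-α)) / (-α)) ≤ m * C₀ * x / α := by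
      have hxx : x ^ (1+α) * x ^ (-α) = x := by
        rw [← Real.rpow_add hx0]; norm_num
      have hx₀α : (0:ℝ) ≤ x₀ ^ (-α) := Real.rpow_nonneg hx₀.le _
      have hfac : (0:ℝ) ≤ m * C₀ * x ^ (1+α) := by positivity
      have e1 : (m * C₀ * x ^ (1 + α)) * ((x₀ ^ (-α) - x ^ (-α)) / (-α))
          = (m * C₀ * x ^ (1+α)) * (x ^ (-α) - x₀ ^ (-α)) / α := by
        rw [div_neg, ← neg_div, neg_sub, mul_div_assoc]
      rw [e1]
      have e2 : (m * C₀ * x ^ (1+α)) * (x ^ (-α) - x₀ ^ (-α))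
          ≤ (m * C₀ * x ^ (1+α)) * x ^ (-α) := by nlinarith
      have e3 : (m * C₀ * x ^ (1+α)) * x ^ (-α) = m * C₀ * x := by
        rw [mul_assoc, hxx]
      calc (m * C₀ * x ^ (1+α)) * (x ^ (-α) - x₀ ^ (-α)) / α
          ≤ (m * C₀ * x ^ (1+α)) * x ^ (-α) / α := by
            exact (div_le_div_iff_of_pos_right hα).2 e2
        _ = m * C₀ * x / α := by rw [e3]
    rw [h6] at h5
    exact h5.trans h7
  -- inner integrands
  set h : ℝ → EuclideanSpace ℝ (Fin n) := fun s => Qm (Ring.inverse (Y s) (g s)) with hh_def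
  set p : ℝ → EuclideanSpace ℝ (Fin n) := fun s => Qp (Ring.inverse (Y s) (g s)) with hp_def
  have hhcont : ContinuousOn h (Ioc 0 x₀) := Qm.continuous.comp_continuousOn hqcont
  have hpcont : ContinuousOn p (Ioc 0 x₀) := Qp.continuous.comp_continuousOn hqcont
  have hInt_h : IntegrableOn h (Ioc 0 x₀) := by
    have h1 := (key_m x₀ ⟨hx₀, le_rfl⟩).1
    simpa [hh_def, hYx₀, ContinuousLinearMap.comp_apply] using h1
  have hhmeas : AEStronglyMeasurable h (volume.restrict (Ioc 0 x₀)) :=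
    hInt_h.aestronglyMeasurable
  have hpmeas : AEStronglyMeasurable p (volume.restrict (Ioc 0 x₀)) :=
    hpcont.aestronglyMeasurable measurableSet_Ioc
  have hIntvl_h : ∀ u ∈ Ioc (0:ℝ) x₀, IntervalIntegrable h volume x₀ u := by
    intro u hu
    apply IntervalIntegrable.symm
    rw [intervalIntegrable_iff_integrableOn_Ioc_of_le hu.2]
    exact hInt_h.mono_set (Ioc_subset_Ioc_left hu.1.le)
  have hIntvl_p : ∀ u ∈ Ioc (0:ℝ) x₀, IntervalIntegrable p volume x₀ u := by
    intro u hu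
    apply ContinuousOn.intervalIntegrable
    apply hpcont.mono
    rw [uIcc_of_ge hu.2]
    exact fun t ht => ⟨lt_of_lt_of_le hu.1 ht.1, ht.2⟩
  -- splitting of the Ioc-integral of h
  have Im_eq : ∀ u ∈ Ioc (0:ℝ) x₀,
      ∫ s in Ioc (0:ℝ) u, h s = (∫ s in Ioc (0:ℝ) x₀, h s) + ∫ s in x₀..u, h s := by
    intro u hu
    have hsplit : ∫ s in Ioc (0:ℝ) x₀, h s
        = (∫ s in Ioc (0:ℝ) u, h s) + ∫ s in Ioc u x₀, h s := by
      rw [← Ioc_union_Ioc_eq_Ioc hu.1.le hu.2]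
      exact setIntegral_union (Ioc_disjoint_Ioc_of_le le_rfl) measurableSet_Ioc
        (hInt_h.mono_set (by rw [← Ioc_union_Ioc_eq_Ioc hu.1.le hu.2]; exact subset_union_left))
        (hInt_h.mono_set (by rw [← Ioc_union_Ioc_eq_Ioc hu.1.le hu.2]; exact subset_union_right))
    have hsymm : ∫ s in x₀..u, h s = -(∫ s in Ioc u x₀, h s) := by
      rw [intervalIntegral.integral_symm, intervalIntegral.integral_of_le hu.2]
    rw [hsymm, hsplit]
    abel
  -- rewriting the stated function in factored form
  have key_eq : ∀ v : EuclideanSpace ℝ (Fin n), ∀ u ∈ Ioc (0:ℝ) x₀,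
      (Y u v + (∫ s in Ioc (0:ℝ) u, (Y u ∘L Qm ∘L Ring.inverse (Y s)) (g s))
        + ∫ s in x₀..u, (Y u ∘L Qp ∘L Ring.inverse (Y s)) (g s))
      = Y u (v + (∫ s in Ioc (0:ℝ) u, h s) + ∫ s in x₀..u, p s) := by
    intro v u hu
    have e1 : ∫ s in Ioc (0:ℝ) u, (Y u ∘L Qm ∘L Ring.inverse (Y s)) (g s)
        = Y u (∫ s in Ioc (0:ℝ) u, h s) := by
      have heq : (fun s => (Y u ∘L Qm ∘L Ring.inverse (Y s)) (g s)) = fun s => Y u (h s) := by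
        funext s; simp [hh_def, ContinuousLinearMap.comp_apply]
      rw [heq, ContinuousLinearMap.integral_comp_comm _
        (hInt_h.mono_set (Ioc_subset_Ioc_right hu.2))]
    have e2 : ∫ s in x₀..u, (Y u ∘L Qp ∘L Ring.inverse (Y s)) (g s)
        = Y u (∫ s in x₀..u, p s) := by
      have heq : (fun s => (Y u ∘L Qp ∘L Ring.inverse (Y s)) (g s)) = fun s => Y u (p s) := by
        funext s; simp [hp_def, ContinuousLinearMap.comp_apply]
      rw [heq, ContinuousLinearMap.intervalIntegral_comp_comm _ (hIntvl_p u hu)]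
    rw [e1, e2, ← map_add, ← map_add]
  refine ⟨fun x hx => ⟨(key_m x hx).1, (key_m x hx).2, (key_p x hx).1, (key_p x hx).2⟩, ?_, ?_⟩
  · -- part (ii)
    intro v x hx
    have hImderiv : HasDerivWithinAt (fun u => ∫ s in Ioc (0:ℝ) u, h s) (h x) (Ioc 0 x₀) x := by
      have base : HasDerivWithinAt
          (fun u => (∫ s in Ioc (0:ℝ) x₀, h s) + ∫ s in x₀..u, h s) (h x) (Ioc 0 x₀) x :=
        HasDerivWithinAt.const_add _ (ftc_aux8 hx₀ hx hhcont hhmeas (hIntvl_h x hx))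
      exact base.congr (fun u hu => Im_eq u hu) (Im_eq x hx)
    have hIpderiv : HasDerivWithinAt (fun u => ∫ s in x₀..u, p s) (p x) (Ioc 0 x₀) x :=
      ftc_aux8 hx₀ hx hpcont hpmeas (hIntvl_p x hx)
    have hcderiv : HasDerivWithinAt
        (fun u => v + (∫ s in Ioc (0:ℝ) u, h s) + ∫ s in x₀..u, p s)
        (h x + p x) (Ioc 0 x₀) x := (hImderiv.const_add v).add hIpderiv
    have hYderiv : HasDerivWithinAt Y ((x⁻¹ • A + B x) ∘L Y x) (Ioc 0 x₀) x :=
      (hYd x hx.1).hasDerivWithinAt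
    have main := hYderiv.clm_apply hcderiv
    have main2 := main.congr (fun u hu => key_eq v u hu) (key_eq v x hx)
    have hyp : Y x (h x + p x) = g x := by
      have e2 : h x + p x = (Qp + Qm) (Ring.inverse (Y x) (g x)) := by
        rw [ContinuousLinearMap.add_apply, hh_def, hp_def]
        dsimp only
        abel
      have e : h x + p x = Ring.inverse (Y x) (g x) := by
        rw [e2, hQsum, ContinuousLinearMap.one_apply]
      rw [e, hYZ x hx.1]
    refine main2.congr_deriv ?_
    symm
    rw [key_eq v x hx, hyp]
    simp only [ContinuousLinearMap.comp_apply, ContinuousLinearMap.add_apply,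
      ContinuousLinearMap.coe_smul', Pi.smul_apply]
  · -- part (iii)
    intro v hv
    have hmem : Ioc (0:ℝ) x₀ ∈ 𝓝[>] (0:ℝ) := Ioc_mem_nhdsGT_of_mem ⟨le_rfl, hx₀⟩
    have hlin : Tendsto (fun u : ℝ => m * C₀ * u / α) (𝓝[>] (0:ℝ)) (𝓝 0) := by
      have hc : Continuous fun u : ℝ => m * C₀ * u / α :=
        ((continuous_const.mul continuous_id).div_const α)
      have h1 := (hc.tendsto 0).mono_left (nhdsWithin_le_nhds : 𝓝[>] (0:ℝ) ≤ 𝓝 0)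
      simpa using h1
    have T1 : Tendsto (fun u => Y u v) (𝓝[>] (0:ℝ)) (𝓝 0) := by
      rw [tendsto_zero_iff_norm_tendsto_zero]
      have hg0 : Tendsto (fun u : ℝ => C₀ * (u / x₀) ^ (1 + α) * ‖v‖) (𝓝[>] (0:ℝ)) (𝓝 0) := by
        have l1 : Tendsto (fun u : ℝ => u / x₀) (𝓝[>] (0:ℝ)) (𝓝 0) := by
          have h1 := ((continuous_id.div_const x₀).tendsto 0).mono_left
            (nhdsWithin_le_nhds : 𝓝[>] (0:ℝ) ≤ 𝓝 0)
          simpa using h1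
        have l2 : Tendsto (fun t : ℝ => t ^ (1+α)) (𝓝 (0:ℝ)) (𝓝 0) := by
          have h1 := (Real.continuousAt_rpow_const 0 (1+α) (Or.inr (by linarith))).tendsto
          rwa [Real.zero_rpow (by linarith : (1:ℝ)+α ≠ 0)] at h1
        have l3 := ((l2.comp l1).const_mul C₀).mul_const ‖v‖
        simpa [Function.comp] using l3
      apply squeeze_zero' (Eventually.of_forall fun _ => norm_nonneg _) _ hg0
      filter_upwards [hmem] with u hu
      have e : Y u v = (Y u ∘L Qp ∘L Ring.inverse (Y x₀)) v := by
        rw [hYx₀, Ring.inverse_one]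
        simp [ContinuousLinearMap.comp_apply, hv]
      rw [e]
      calc ‖(Y u ∘L Qp ∘L Ring.inverse (Y x₀)) v‖
          ≤ ‖Y u ∘L Qp ∘L Ring.inverse (Y x₀)‖ * ‖v‖ := ContinuousLinearMap.le_opNorm _ _
        _ ≤ C₀ * (u / x₀) ^ (1 + α) * ‖v‖ :=
            mul_le_mul_of_nonneg_right (hestp u x₀ hu.1 hu.2 le_rfl) (norm_nonneg v)
    have T2 : Tendsto (fun u => ∫ s in Ioc (0:ℝ) u, (Y u ∘L Qm ∘L Ring.inverse (Y s)) (g s))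
        (𝓝[>] (0:ℝ)) (𝓝 0) := by
      rw [tendsto_zero_iff_norm_tendsto_zero]
      apply squeeze_zero' (Eventually.of_forall fun _ => norm_nonneg _) _ hlin
      filter_upwards [hmem] with u hu
      exact (key_m u hu).2
    have T3 : Tendsto (fun u => ∫ s in x₀..u, (Y u ∘L Qp ∘L Ring.inverse (Y s)) (g s))
        (𝓝[>] (0:ℝ)) (𝓝 0) := by
      rw [tendsto_zero_iff_norm_tendsto_zero]
      apply squeeze_zero' (Eventually.of_forall fun _ => norm_nonneg _) _ hlin
      filter_upwards [hmem] with u hu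
      have e : ∫ s in x₀..u, (Y u ∘L Qp ∘L Ring.inverse (Y s)) (g s)
          = -(∫ s in Ioc u x₀, (Y u ∘L Qp ∘L Ring.inverse (Y s)) (g s)) := by
        rw [intervalIntegral.integral_symm, intervalIntegral.integral_of_le hu.2]
      rw [e, norm_neg]
      exact (key_p u hu).2
    have hsum := (T1.add T2).add T3
    simpa only [add_zero] using hsum
end

section
/- Let g : [x₀,∞) → ℝⁿ be continuous and bounded with g(x) → 0 as x → ∞, and let u ∈ ℝⁿ satisfy P₋u = u. Then the function ŷ_u(x) := Y(x;x₀)u + ∫_{x₀}^{x} Y(x;x₀)P₋Y(s;x₀)⁻¹ g(s) ds − ∫_{x}^{∞} Y(x;x₀)P₊Y(s;x₀)⁻¹ g(s) ds is well defined for x ≥ x₀ (the improper integral converges absolutely), solves y′ = (A/x + B(x))y + g(x) on [x₀,∞), and satisfies ŷ_u(x) → 0 as x → ∞. -/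
open MeasureTheory Set Filter
open scoped Topology

set_option maxHeartbeats 1000000 in
/-- on `[x₀, ∞)`, for `u` with `P₋ u = u`, the function
`ŷ_u(x) = Y(x;x₀) u + ∫_{x₀}^x Y(x;x₀) P₋ Y(s;x₀)⁻¹ g(s) ds − ∫_x^∞ Y(x;x₀) P₊ Y(s;x₀)⁻¹ g(s) ds`
is well defined, solves `y' = (A/x + B(x)) y + g(x)`, and tends to `0` as `x → ∞`. -/
theorem bounded_solutions_at_infinity (n : ℕ)
    (A : EuclideanSpace ℝ (Fin n) →L[ℝ] EuclideanSpace ℝ (Fin n))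
    (B : ℝ → EuclideanSpace ℝ (Fin n) →L[ℝ] EuclideanSpace ℝ (Fin n))
    (hBcont : ContinuousOn B (Set.Ioi 0)) (hBbdd : ∃ M, ∀ x > (0 : ℝ), ‖B x‖ ≤ M)
    (x₀ : ℝ) (hx₀ : 0 < x₀)
    -- the evolution operator Y(·;x₀)
    (Y : ℝ → EuclideanSpace ℝ (Fin n) →L[ℝ] EuclideanSpace ℝ (Fin n))
    (hYd : ∀ x > (0 : ℝ), HasDerivAt Y ((x⁻¹ • A + B x) ∘L Y x) x)
    (hYx₀ : Y x₀ = 1) (hYu : ∀ x > (0 : ℝ), IsUnit (Y x))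
    -- the projectors P₋, P₊
    (Pm Pp : EuclideanSpace ℝ (Fin n) →L[ℝ] EuclideanSpace ℝ (Fin n))
    (hPm : Pm ∘L Pm = Pm) (hPp : Pp ∘L Pp = Pp) (hPsum : Pm + Pp = 1)
    (hPmp : Pm ∘L Pp = 0) (hPpm : Pp ∘L Pm = 0)
    -- the exponential dichotomy estimates
    (Cs γ : ℝ) (hCs : 0 < Cs) (hγ : 0 < γ)
    (hestm : ∀ x s : ℝ, x₀ ≤ s → s ≤ x →
      ‖Y x ∘L Pm ∘L Ring.inverse (Y s)‖ ≤ Cs * Real.exp (-(γ * (x - s))))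
    (hestp : ∀ x s : ℝ, x₀ ≤ x → x ≤ s →
      ‖Y x ∘L Pp ∘L Ring.inverse (Y s)‖ ≤ Cs * Real.exp (-(γ * (s - x))))
    -- the inhomogeneity g
    (g : ℝ → EuclideanSpace ℝ (Fin n))
    (hgcont : ContinuousOn g (Set.Ici x₀)) (hgbdd : ∃ M, ∀ x ≥ x₀, ‖g x‖ ≤ M)
    (hg0 : Tendsto g atTop (𝓝 0))
    (u : EuclideanSpace ℝ (Fin n)) (hu : Pm u = u) :
    -- (i) the improper integral converges absolutely
    (∀ x ≥ x₀,
      IntegrableOn (fun s => (Y x ∘L Pp ∘L Ring.inverse (Y s)) (g s)) (Set.Ioi x)) ∧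
    -- (ii) ŷ_u solves the non-homogeneous system on [x₀, ∞)
    (∀ x ∈ Set.Ici x₀,
      HasDerivWithinAt
        (fun t => Y t u + (∫ s in x₀..t, (Y t ∘L Pm ∘L Ring.inverse (Y s)) (g s))
          - ∫ s in Set.Ioi t, (Y t ∘L Pp ∘L Ring.inverse (Y s)) (g s))
        (x⁻¹ • A (Y x u + (∫ s in x₀..x, (Y x ∘L Pm ∘L Ring.inverse (Y s)) (g s))
            - ∫ s in Set.Ioi x, (Y x ∘L Pp ∘L Ring.inverse (Y s)) (g s))
          + B x (Y x u + (∫ s in x₀..x, (Y x ∘L Pm ∘L Ring.inverse (Y s)) (g s))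
            - ∫ s in Set.Ioi x, (Y x ∘L Pp ∘L Ring.inverse (Y s)) (g s))
          + g x)
        (Set.Ici x₀) x) ∧
    -- (iii) ŷ_u(x) → 0 as x → ∞
    Tendsto
      (fun t => Y t u + (∫ s in x₀..t, (Y t ∘L Pm ∘L Ring.inverse (Y s)) (g s))
        - ∫ s in Set.Ioi t, (Y t ∘L Pp ∘L Ring.inverse (Y s)) (g s))
      atTop (𝓝 0) := by
  obtain ⟨M, hM⟩ := hgbdd
  have hM0 : 0 ≤ M := le_trans (norm_nonneg _) (hM x₀ le_rfl)
  set Z : ℝ → EuclideanSpace ℝ (Fin n) →L[ℝ] EuclideanSpace ℝ (Fin n) :=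
    fun s => Ring.inverse (Y s) with hZdef
  have hIci : Ici x₀ ⊆ Ioi (0:ℝ) := fun s hs => lt_of_lt_of_le hx₀ hs
  have hZcont : ContinuousOn Z (Ioi 0) := by
    intro s hs
    have h1 := NormedRing.inverse_continuousAt (hYu s hs).unit
    rw [IsUnit.unit_spec] at h1
    exact (h1.comp (hYd s hs).continuousAt).continuousWithinAt
  have hYZ : ∀ x, 0 < x → Y x ∘L Z x = 1 := by
    intro x hx
    have h := Ring.mul_inverse_cancel (Y x) (hYu x hx)
    rwa [ContinuousLinearMap.mul_def] at h
  have hgZcont : ContinuousOn (fun s => Z s (g s)) (Ici x₀) :=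
    (hZcont.mono hIci).clm_apply hgcont
  have hcontm : ContinuousOn (fun s => (Pm ∘L Z s) (g s)) (Ici x₀) := by
    simp only [ContinuousLinearMap.comp_apply]
    exact Pm.continuous.comp_continuousOn hgZcont
  have hcontp : ContinuousOn (fun s => (Pp ∘L Z s) (g s)) (Ici x₀) := by
    simp only [ContinuousLinearMap.comp_apply]
    exact Pp.continuous.comp_continuousOn hgZcont
  have hPpZ : ∀ s, x₀ ≤ s → ‖Pp ∘L Z s‖ ≤ Cs * Real.exp (-(γ*(s-x₀))) := by
    intro s hs
    have h := hestp x₀ s le_rfl hs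
    rwa [hYx₀, ContinuousLinearMap.one_def, ContinuousLinearMap.id_comp] at h
  have hbnd_p : ∀ s ∈ Ici x₀, ‖(Pp ∘L Z s) (g s)‖ ≤ Cs * Real.exp (-(γ*(s-x₀))) * M := by
    intro s hs
    calc ‖(Pp ∘L Z s) (g s)‖ ≤ ‖Pp ∘L Z s‖ * ‖g s‖ := ContinuousLinearMap.le_opNorm _ _
      _ ≤ (Cs * Real.exp (-(γ*(s-x₀)))) * M :=
        mul_le_mul (hPpZ s hs) (hM s hs) (norm_nonneg _) (by positivity)
  have hexpint : ∀ a c : ℝ, IntegrableOn (fun s => Real.exp (-(γ * (s - c)))) (Ioi a) := by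
    intro a c
    have h : IntegrableOn (fun s => Real.exp (γ * c) * Real.exp (-γ * s)) (Ioi a) :=
      (exp_neg_integrableOn_Ioi a hγ).const_mul (Real.exp (γ * c))
    exact h.congr_fun (fun s _ => by dsimp only; rw [← Real.exp_add]; ring_nf) measurableSet_Ioi
  have hexpD : ∀ c s : ℝ, HasDerivAt (fun r => -(Real.exp (-(γ*(r-c))) / γ))
      (Real.exp (-(γ*(s-c)))) s := by
    intro c s
    have h1 : HasDerivAt (fun r : ℝ => -(γ*(r-c))) (-γ) s := by
      exact ((((hasDerivAt_id' s).sub_const c).const_mul γ).neg).congr_deriv (by ring)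
    have h2 := h1.exp
    have h3 := (h2.div_const γ).neg
    refine h3.congr_deriv ?_
    field_simp
  have hexp0 : ∀ c : ℝ, Tendsto (fun t => Real.exp (-(γ*(t - c)))) atTop (𝓝 0) := by
    intro c
    apply Real.tendsto_exp_atBot.comp
    have h1 : Tendsto (fun t : ℝ => γ * (t - c)) atTop atTop := by
      apply Tendsto.const_mul_atTop hγ
      simpa [sub_eq_add_neg] using tendsto_atTop_add_const_right atTop (-c) tendsto_id
    exact tendsto_neg_atTop_atBot.comp h1
  have hexpval : ∀ a : ℝ, ∫ s in Ioi a, Real.exp (-(γ*(s-a))) = 1/γ := by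
    intro a
    have h := integral_Ioi_of_hasDerivAt_of_tendsto
      (f := fun r => -(Real.exp (-(γ*(r-a))) / γ)) (f' := fun s => Real.exp (-(γ*(s-a))))
      (hexpD a a).continuousAt.continuousWithinAt
      (fun s _ => hexpD a s) (hexpint a a)
      (by simpa using ((hexp0 a).div_const γ).neg)
    rw [h]
    simp
  have hintp : IntegrableOn (fun s => (Pp ∘L Z s) (g s)) (Ioi x₀) := by
    refine Integrable.mono' (((hexpint x₀ x₀).const_mul Cs).mul_const M)
      ((hcontp.mono Ioi_subset_Ici_self).aestronglyMeasurable measurableSet_Ioi) ?_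
    exact (ae_restrict_iff' measurableSet_Ioi).mpr
      (Eventually.of_forall fun s hs => hbnd_p s (Ioi_subset_Ici_self hs))
  have key_i : ∀ x, x₀ ≤ x → IntegrableOn (fun s => (Y x ∘L Pp ∘L Z s) (g s)) (Ioi x) := by
    intro x hx
    have h1 : IntegrableOn (fun s => (Pp ∘L Z s) (g s)) (Ioi x) :=
      hintp.mono_set (Ioi_subset_Ioi hx)
    have h2 : IntegrableOn (fun s => Y x ((Pp ∘L Z s) (g s))) (Ioi x) :=
      (Y x).integrable_comp h1
    exact h2.congr_fun
      (fun s _ => by simp [ContinuousLinearMap.comp_apply]) measurableSet_Ioi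
  -- the primitive functions
  set w1 : ℝ → EuclideanSpace ℝ (Fin n) := fun t => ∫ s in x₀..t, (Pm ∘L Z s) (g s) with hw1def
  set w2 : ℝ → EuclideanSpace ℝ (Fin n) := fun t => ∫ s in x₀..t, (Pp ∘L Z s) (g s) with hw2def
  set Kp : EuclideanSpace ℝ (Fin n) := ∫ s in Ioi x₀, (Pp ∘L Z s) (g s) with hKpdef
  set v : ℝ → EuclideanSpace ℝ (Fin n) := fun t => u + w1 t - (Kp - w2 t) with hvdef
  have hsplit : ∀ t, x₀ ≤ t → ∫ s in Ioi t, (Pp ∘L Z s) (g s) = Kp - w2 t := by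
    intro t ht
    have hun : Ioc x₀ t ∪ Ioi t = Ioi x₀ := Ioc_union_Ioi_eq_Ioi ht
    have h := setIntegral_union (Ioc_disjoint_Ioi le_rfl) measurableSet_Ioi
      (hintp.mono_set (hun ▸ subset_union_left))
      (hintp.mono_set (Ioi_subset_Ioi ht))
    rw [hun] at h
    have hw : w2 t = ∫ s in Ioc x₀ t, (Pp ∘L Z s) (g s) :=
      intervalIntegral.integral_of_le ht
    rw [hKpdef, h, hw]
    abel
  -- FTC for primitives of continuous functions on Ici x₀
  have FTC : ∀ (f : ℝ → EuclideanSpace ℝ (Fin n)), ContinuousOn f (Ici x₀) →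
      ∀ x ∈ Ici x₀, HasDerivWithinAt (fun t => ∫ s in x₀..t, f s) (f x) (Ici x₀) x := by
    intro f hf x hx
    have hii : IntervalIntegrable f volume x₀ x := by
      apply ContinuousOn.intervalIntegrable
      apply hf.mono
      rw [uIcc_of_le hx]
      exact Icc_subset_Ici_self
    rcases eq_or_lt_of_le (mem_Ici.mp hx) with rfl | hlt
    · exact intervalIntegral.integral_hasDerivWithinAt_right (t := Ioi x₀) hii
        ⟨Ici x₀, Filter.mem_of_superset self_mem_nhdsWithin Ioi_subset_Ici_self,
          hf.aestronglyMeasurable measurableSet_Ici⟩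
        ((hf x₀ self_mem_Ici).mono Ioi_subset_Ici_self)
    · have hnhds : Ici x₀ ∈ 𝓝 x := Ici_mem_nhds hlt
      exact (intervalIntegral.integral_hasDerivAt_right hii
        ⟨Ici x₀, hnhds, hf.aestronglyMeasurable measurableSet_Ici⟩
        ((hf x hx).continuousAt hnhds)).hasDerivWithinAt
  -- the function in the statement agrees with t ↦ Y t (v t) on Ici x₀
  have heq : ∀ t ∈ Ici x₀,
      Y t u + (∫ s in x₀..t, (Y t ∘L Pm ∘L Z s) (g s))
        - ∫ s in Ioi t, (Y t ∘L Pp ∘L Z s) (g s) = Y t (v t) := by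
    intro t ht
    have hii : IntervalIntegrable (fun s => (Pm ∘L Z s) (g s)) volume x₀ t := by
      apply ContinuousOn.intervalIntegrable
      apply hcontm.mono
      rw [uIcc_of_le ht]
      exact Icc_subset_Ici_self
    have e1 : (∫ s in x₀..t, (Y t ∘L Pm ∘L Z s) (g s)) = Y t (w1 t) := by
      rw [hw1def, ← (Y t).intervalIntegral_comp_comm hii]
      simp [ContinuousLinearMap.comp_apply]
    have e2 : (∫ s in Ioi t, (Y t ∘L Pp ∘L Z s) (g s)) = Y t (Kp - w2 t) := by
      rw [← hsplit t ht, ← (Y t).integral_comp_comm (hintp.mono_set (Ioi_subset_Ioi ht))]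
      simp [ContinuousLinearMap.comp_apply]
    rw [e1, e2, hvdef]
    simp only [map_add, map_sub]
  -- part (ii)
  have key_ii : ∀ x ∈ Ici x₀,
      HasDerivWithinAt
        (fun t => Y t u + (∫ s in x₀..t, (Y t ∘L Pm ∘L Z s) (g s))
          - ∫ s in Ioi t, (Y t ∘L Pp ∘L Z s) (g s))
        (x⁻¹ • A (Y x u + (∫ s in x₀..x, (Y x ∘L Pm ∘L Z s) (g s))
            - ∫ s in Ioi x, (Y x ∘L Pp ∘L Z s) (g s))
          + B x (Y x u + (∫ s in x₀..x, (Y x ∘L Pm ∘L Z s) (g s))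
            - ∫ s in Ioi x, (Y x ∘L Pp ∘L Z s) (g s))
          + g x)
        (Ici x₀) x := by
    intro x hx
    have hx0 : (0:ℝ) < x := hIci hx
    have hw1d := FTC _ hcontm x hx
    have hw2d := FTC _ hcontp x hx
    have hvd : HasDerivWithinAt v ((Pm ∘L Z x) (g x) + (Pp ∘L Z x) (g x)) (Ici x₀) x := by
      have h := (hw1d.const_add u).sub (hw2d.const_sub Kp)
      exact h.congr_deriv (sub_neg_eq_add _ _)
    have hsum : (Pm ∘L Z x) (g x) + (Pp ∘L Z x) (g x) = Z x (g x) := by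
      rw [← ContinuousLinearMap.add_apply, ← ContinuousLinearMap.add_comp, hPsum,
        ContinuousLinearMap.one_def, ContinuousLinearMap.id_comp]
    rw [hsum] at hvd
    have hYdx : HasDerivWithinAt Y ((x⁻¹ • A + B x) ∘L Y x) (Ici x₀) x :=
      (hYd x hx0).hasDerivWithinAt
    have hprod := hYdx.clm_apply hvd
    have hgx : Y x (Z x (g x)) = g x := by
      have h := congrArg (fun L => L (g x)) (hYZ x hx0)
      simpa using h
    have hfin := hprod.congr (fun t ht => heq t ht) (heq x hx)
    refine hfin.congr_deriv (Eq.symm ?_)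
    rw [heq x hx]
    simp [ContinuousLinearMap.add_apply, ContinuousLinearMap.comp_apply,
      ContinuousLinearMap.smul_apply, hgx]
  -- part (iii): each of the three pieces tends to 0
  have ha : Tendsto (fun t => Y t u) atTop (𝓝 0) := by
    have hlim : Tendsto (fun t => Cs * Real.exp (-(γ*(t-x₀))) * ‖u‖) atTop (𝓝 0) := by
      simpa using ((hexp0 x₀).const_mul Cs).mul_const ‖u‖
    refine squeeze_zero_norm' ?_ hlim
    · filter_upwards [eventually_ge_atTop x₀] with t ht
      have hZ1 : Z x₀ = 1 := by simp only [hZdef]; rw [hYx₀, Ring.inverse_one]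
      have he : (Y t ∘L Pm ∘L Z x₀) u = Y t u := by
        simp [ContinuousLinearMap.comp_apply, hZ1, hu]
      rw [← he]
      calc ‖(Y t ∘L Pm ∘L Z x₀) u‖ ≤ ‖Y t ∘L Pm ∘L Z x₀‖ * ‖u‖ :=
            ContinuousLinearMap.le_opNorm _ _
        _ ≤ Cs * Real.exp (-(γ*(t-x₀))) * ‖u‖ :=
            mul_le_mul_of_nonneg_right (hestm t x₀ le_rfl ht) (norm_nonneg u)
  have hc : Tendsto (fun t => ∫ s in Ioi t, (Y t ∘L Pp ∘L Z s) (g s)) atTop (𝓝 0) := by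
    rw [NormedAddCommGroup.tendsto_nhds_zero]
    intro ε hε
    have hδ : 0 < γ * ε / (2 * Cs) := by positivity
    obtain ⟨N, hN⟩ := (Metric.tendsto_atTop.mp hg0) _ hδ
    filter_upwards [eventually_ge_atTop (max N x₀)] with t ht
    have htN : N ≤ t := le_trans (le_max_left _ _) ht
    have htx : x₀ ≤ t := le_trans (le_max_right _ _) ht
    have hbound : ∀ s ∈ Ioi t, ‖(Y t ∘L Pp ∘L Z s) (g s)‖
        ≤ Cs * (γ*ε/(2*Cs)) * Real.exp (-(γ*(s-t))) := by
      intro s hs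
      have hgs : ‖g s‖ ≤ γ*ε/(2*Cs) := by
        have h := hN s (le_trans htN (le_of_lt hs))
        rw [dist_zero_right] at h
        exact h.le
      calc ‖(Y t ∘L Pp ∘L Z s) (g s)‖ ≤ ‖Y t ∘L Pp ∘L Z s‖ * ‖g s‖ :=
            ContinuousLinearMap.le_opNorm _ _
        _ ≤ (Cs * Real.exp (-(γ*(s-t)))) * (γ*ε/(2*Cs)) :=
            mul_le_mul (hestp t s htx (le_of_lt hs)) hgs (norm_nonneg _) (by positivity)
        _ = Cs * (γ*ε/(2*Cs)) * Real.exp (-(γ*(s-t))) := by ring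
    have hIb : IntegrableOn (fun s => Cs * (γ*ε/(2*Cs)) * Real.exp (-(γ*(s-t)))) (Ioi t) :=
      (hexpint t t).const_mul _
    have h1 : ‖∫ s in Ioi t, (Y t ∘L Pp ∘L Z s) (g s)‖
        ≤ ∫ s in Ioi t, Cs * (γ*ε/(2*Cs)) * Real.exp (-(γ*(s-t))) := by
      apply norm_integral_le_of_norm_le hIb
      exact (ae_restrict_iff' measurableSet_Ioi).mpr (Eventually.of_forall hbound)
    have h2 : ∫ s in Ioi t, Cs * (γ*ε/(2*Cs)) * Real.exp (-(γ*(s-t)))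
        = Cs * (γ*ε/(2*Cs)) * (1/γ) := by
      rw [integral_const_mul, hexpval t]
    have h3 : Cs * (γ*ε/(2*Cs)) * (1/γ) = ε/2 := by
      field_simp
    calc ‖∫ s in Ioi t, (Y t ∘L Pp ∘L Z s) (g s)‖ ≤ ε/2 := by rw [← h3, ← h2]; exact h1
      _ < ε := by linarith
  have hb : Tendsto (fun t => ∫ s in x₀..t, (Y t ∘L Pm ∘L Z s) (g s)) atTop (𝓝 0) := by
    rw [NormedAddCommGroup.tendsto_nhds_zero]
    intro ε hε
    set δ := γ * ε / (4 * Cs) with hδdef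
    have hδ : 0 < δ := by positivity
    obtain ⟨N, hN⟩ := (Metric.tendsto_atTop.mp hg0) _ hδ
    set T := max N x₀ with hTdef
    have hTx : x₀ ≤ T := le_max_right _ _
    have hgT : ∀ s, T ≤ s → ‖g s‖ ≤ δ := by
      intro s hs
      have h := hN s (le_trans (le_max_left _ _) hs)
      rw [dist_zero_right] at h
      exact h.le
    have hev2 : ∀ᶠ t in atTop, Cs * M * Real.exp (-(γ*(t-T))) * |T - x₀| < ε/2 := by
      have hten : Tendsto (fun t => Cs * M * Real.exp (-(γ*(t-T))) * |T - x₀|) atTop (𝓝 0) := by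
        simpa using ((hexp0 T).const_mul (Cs * M)).mul_const |T - x₀|
      exact hten.eventually_lt_const (by linarith)
    filter_upwards [eventually_ge_atTop T, hev2] with t ht hev
    have htx : x₀ ≤ t := hTx.trans ht
    have hcont_t : ContinuousOn (fun s => (Y t ∘L Pm ∘L Z s) (g s)) (Ici x₀) := by
      simp only [ContinuousLinearMap.comp_apply]
      exact (Y t).continuous.comp_continuousOn (Pm.continuous.comp_continuousOn hgZcont)
    have hiiA : IntervalIntegrable (fun s => (Y t ∘L Pm ∘L Z s) (g s)) volume x₀ T := by
      apply ContinuousOn.intervalIntegrable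
      apply hcont_t.mono
      rw [uIcc_of_le hTx]
      exact Icc_subset_Ici_self
    have hiiB : IntervalIntegrable (fun s => (Y t ∘L Pm ∘L Z s) (g s)) volume T t := by
      apply ContinuousOn.intervalIntegrable
      apply hcont_t.mono
      rw [uIcc_of_le ht]
      exact fun s hs => hTx.trans hs.1
    have hsplit2 : (∫ s in x₀..t, (Y t ∘L Pm ∘L Z s) (g s))
        = (∫ s in x₀..T, (Y t ∘L Pm ∘L Z s) (g s)) + ∫ s in T..t, (Y t ∘L Pm ∘L Z s) (g s) :=
      (intervalIntegral.integral_add_adjacent_intervals hiiA hiiB).symm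
    have hp1 : ‖∫ s in x₀..T, (Y t ∘L Pm ∘L Z s) (g s)‖
        ≤ Cs * M * Real.exp (-(γ*(t-T))) * |T - x₀| := by
      apply intervalIntegral.norm_integral_le_of_norm_le_const
      intro s hs
      rw [uIoc_of_le hTx] at hs
      have h1 : ‖Y t ∘L Pm ∘L Z s‖ ≤ Cs * Real.exp (-(γ*(t-s))) :=
        hestm t s hs.1.le (hs.2.trans ht)
      have h2 : Real.exp (-(γ*(t-s))) ≤ Real.exp (-(γ*(t-T))) := by
        apply Real.exp_le_exp.mpr
        nlinarith [hs.2]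
      calc ‖(Y t ∘L Pm ∘L Z s) (g s)‖ ≤ ‖Y t ∘L Pm ∘L Z s‖ * ‖g s‖ :=
            ContinuousLinearMap.le_opNorm _ _
        _ ≤ (Cs * Real.exp (-(γ*(t-s)))) * M :=
            mul_le_mul h1 (hM s hs.1.le) (norm_nonneg _) (by positivity)
        _ = Cs * M * Real.exp (-(γ*(t-s))) := by ring
        _ ≤ Cs * M * Real.exp (-(γ*(t-T))) :=
            mul_le_mul_of_nonneg_left h2 (mul_nonneg hCs.le hM0)
    have hp2 : ‖∫ s in T..t, (Y t ∘L Pm ∘L Z s) (g s)‖ ≤ ε/4 := by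
      have hbd : ∀ s ∈ Set.uIoc T t, ‖(Y t ∘L Pm ∘L Z s) (g s)‖ ≤ Cs * δ * Real.exp (-(γ*(t-s))) := by
        intro s hs
        rw [uIoc_of_le ht] at hs
        have h1 := hestm t s (hTx.trans hs.1.le) hs.2
        have h2 := hgT s hs.1.le
        calc ‖(Y t ∘L Pm ∘L Z s) (g s)‖ ≤ ‖Y t ∘L Pm ∘L Z s‖ * ‖g s‖ :=
              ContinuousLinearMap.le_opNorm _ _
          _ ≤ (Cs * Real.exp (-(γ*(t-s)))) * δ :=
              mul_le_mul h1 h2 (norm_nonneg _) (by positivity)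
          _ = Cs * δ * Real.exp (-(γ*(t-s))) := by ring
      have hD2 : ∀ s : ℝ, HasDerivAt (fun r => Real.exp (-(γ*(t-r)))/γ)
          (Real.exp (-(γ*(t-s)))) s := by
        intro s
        have h1 : HasDerivAt (fun r : ℝ => -(γ*(t-r))) γ s := by
          have hfe : (fun r : ℝ => -(γ*(t-r))) = fun r => γ * r - γ * t := by
            funext r; ring
          rw [hfe]
          simpa using ((hasDerivAt_id s).const_mul γ).sub_const (γ*t)
        have h2 := (h1.exp).div_const γ
        refine h2.congr_deriv ?_
        field_simp
      have hbcont : Continuous (fun s : ℝ => Real.exp (-(γ*(t-s)))) :=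
        Real.continuous_exp.comp (by fun_prop)
      have hbint : IntervalIntegrable (fun s => Cs * δ * Real.exp (-(γ*(t-s)))) volume T t :=
        ((continuous_const.mul hbcont).intervalIntegrable T t)
      have h3 := intervalIntegral.norm_integral_le_of_norm_le
        ht (Eventually.of_forall (fun s hs => hbd s (by rw [uIoc_of_le ht]; exact hs))) hbint
      have h4 : ∫ s in T..t, Cs * δ * Real.exp (-(γ*(t-s)))
          = Cs * δ * ((1 - Real.exp (-(γ*(t-T))))/γ) := by
        rw [intervalIntegral.integral_const_mul]
        rw [intervalIntegral.integral_eq_sub_of_hasDerivAt (fun s _ => hD2 s)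
          (hbcont.intervalIntegrable T t)]
        congr 1
        simp [sub_div]
      have he1 : Real.exp (-(γ*(t-T))) ≤ 1 := by
        rw [Real.exp_le_one_iff]
        nlinarith
      have he0 : 0 < Real.exp (-(γ*(t-T))) := Real.exp_pos _
      have h5 : |Cs * δ * ((1 - Real.exp (-(γ*(t-T))))/γ)| ≤ Cs * δ / γ := by
        rw [abs_of_nonneg (mul_nonneg (by positivity)
          (div_nonneg (by linarith) hγ.le))]
        have h7 : (1 - Real.exp (-(γ*(t-T))))/γ ≤ 1/γ := by
          gcongr
          · linarith
        calc Cs * δ * ((1 - Real.exp (-(γ*(t-T))))/γ) ≤ Cs * δ * (1/γ) :=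
              mul_le_mul_of_nonneg_left h7 (by positivity)
          _ = Cs * δ / γ := by ring
      have h6 : Cs * δ / γ = ε/4 := by
        rw [hδdef]
        field_simp
      calc ‖∫ s in T..t, (Y t ∘L Pm ∘L Z s) (g s)‖
          ≤ |∫ s in T..t, Cs * δ * Real.exp (-(γ*(t-s)))| := h3.trans (le_abs_self _)
        _ = |Cs * δ * ((1 - Real.exp (-(γ*(t-T))))/γ)| := by rw [h4]
        _ ≤ Cs * δ / γ := h5
        _ = ε/4 := h6
    calc ‖∫ s in x₀..t, (Y t ∘L Pm ∘L Z s) (g s)‖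
        = ‖(∫ s in x₀..T, (Y t ∘L Pm ∘L Z s) (g s))
            + ∫ s in T..t, (Y t ∘L Pm ∘L Z s) (g s)‖ := by rw [hsplit2]
      _ ≤ ‖∫ s in x₀..T, (Y t ∘L Pm ∘L Z s) (g s)‖
            + ‖∫ s in T..t, (Y t ∘L Pm ∘L Z s) (g s)‖ := norm_add_le _ _
      _ < ε/2 + ε/4 := add_lt_add_of_lt_of_le (lt_of_le_of_lt hp1 hev) hp2
      _ < ε := by linarith
  refine ⟨fun x hx => key_i x hx, key_ii, ?_⟩
  have hfinal := (ha.add hb).sub hc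
  simpa using hfinal
end
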